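/- arXiv:1101.4213 — 5 statements merged into one kernel-verified Lean document; each statement's English description precedes it below -/
import Mathlib

section
/- Let (X, r_X, μ_X) and (Y, r_Y, μ_Y) be I-marked metric measure spaces. If ∫ φ dν^{(X,r_X,μ_X)} = ∫ φ dν^{(Y,r_Y,μ_Y)} for every bounded continuous real-valued function φ on ℝ₊^{(ℕ choose 2)} × I^ℕ that depends on only finitely many coordinates, then (X, r_X, μ_X) and (Y, r_Y, μ_Y) are equivalent. -/
open MeasureTheory Topology Filter NNReal BoundedContinuousFunction

noncomputable section

/-- The index set `{(i,j) ∈ ℕ × ℕ : i < j}`, indexing the entries of a distance matrix. -/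
abbrev PairIdx : Type := {p : ℕ × ℕ // p.1 < p.2}

/-- The marked distance matrix space `ℝ₊^(ℕ choose 2) × I^ℕ`. -/
abbrev MDM (I : Type) : Type := (PairIdx → ℝ≥0) × (ℕ → I)

/-- `μinf` is the countable product `μ^⊗ℕ` of copies of `μ`: every finite-dimensional
cylinder has product measure. -/
def IsProductMeasure {α : Type} [MeasurableSpace α] (μ : Measure α)
    (μinf : Measure (ℕ → α)) : Prop :=
  IsProbabilityMeasure μinf ∧
    ∀ (n : ℕ) (A : ℕ → Set α), (∀ i, MeasurableSet (A i)) →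
      μinf {s | ∀ i < n, s i ∈ A i} = ∏ i ∈ Finset.range n, μ (A i)

/-- The marked distance matrix map `R^(X,r) : (X × I)^ℕ → ℝ₊^(ℕ choose 2) × I^ℕ`. -/
def distMatMap (X I : Type) [PseudoMetricSpace X] : (ℕ → X × I) → MDM I :=
  fun s => (fun p => nndist (s p.1.1).1 (s p.1.2).1, fun k => (s k).2)

/-- The marked distance matrix distribution of `(X, r, μ)`, given the product measure
`μinf = μ^⊗ℕ` on `(X × I)^ℕ`: the pushforward of `μinf` under the distance matrix map. -/
def mDMD {X I : Type} [PseudoMetricSpace X] [MeasurableSpace X] [MeasurableSpace I]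
    (μinf : Measure (ℕ → X × I)) : Measure (MDM I) :=
  μinf.map (distMatMap X I)

/-- The support of a measure on a metric space. -/
def metricSupport {α : Type} [PseudoMetricSpace α] [MeasurableSpace α] (μ : Measure α) :
    Set α := {x | ∀ ε > 0, 0 < μ (Metric.ball x ε)}

/-- Two marked metric measure spaces are equivalent (measure- and mark-preserving
isometric). -/
def MMMEquiv {I X Y : Type} [MetricSpace I] [MetricSpace X] [MetricSpace Y]
    [MeasurableSpace I] [MeasurableSpace X] [MeasurableSpace Y]
    (μX : Measure (X × I)) (μY : Measure (Y × I)) : Prop :=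
  ∃ φ : X → Y,
    Set.MapsTo φ (metricSupport (μX.map Prod.fst)) (metricSupport (μY.map Prod.fst)) ∧
    Measurable ((metricSupport (μX.map Prod.fst)).restrict φ) ∧
    (∀ x ∈ metricSupport (μX.map Prod.fst), ∀ x' ∈ metricSupport (μX.map Prod.fst),
      dist x x' = dist (φ x) (φ x')) ∧
    μX.map (Prod.map φ id) = μY

/-- The sum metric `r_Z + r_I` on `Z × I`. -/
def pairDist {Z I : Type} [PseudoMetricSpace Z] [PseudoMetricSpace I] (p q : Z × I) : ℝ :=
  dist p.1 q.1 + dist p.2 q.2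

/-- The Prohorov distance between two measures on `Z × I`, with respect to the
sum metric `r_Z + r_I`. -/
def prohorovDistSum {Z I : Type} [PseudoMetricSpace Z] [PseudoMetricSpace I]
    {m : MeasurableSpace (Z × I)} (μ ν : Measure (Z × I)) : ℝ :=
  sInf {ε : ℝ | 0 < ε ∧ ∀ A : Set (Z × I), MeasurableSet A →
    μ A ≤ ν {q | ∃ p ∈ A, pairDist p q < ε} + ENNReal.ofReal ε ∧
    ν A ≤ μ {q | ∃ p ∈ A, pairDist p q < ε} + ENNReal.ofReal ε}

/-- The Prohorov distance between two measures on a metric space. -/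
def prohorovDist {α : Type} [PseudoMetricSpace α] {m : MeasurableSpace α}
    (μ ν : Measure α) : ℝ :=
  sInf {ε : ℝ | 0 < ε ∧ ∀ A : Set α, MeasurableSet A →
    μ A ≤ ν {q | ∃ p ∈ A, dist p q < ε} + ENNReal.ofReal ε ∧
    ν A ≤ μ {q | ∃ p ∈ A, dist p q < ε} + ENNReal.ofReal ε}

/-- The marked Gromov-Prohorov distance between two marked metric measure spaces. -/
def mGPDist {I X₁ X₂ : Type} [MetricSpace I] [MetricSpace X₁] [MetricSpace X₂]
    [MeasurableSpace I] [MeasurableSpace X₁] [MeasurableSpace X₂]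
    (μ₁ : Measure (X₁ × I)) (μ₂ : Measure (X₂ × I)) : ℝ :=
  sInf {d : ℝ | ∃ (Z : Type) (_ : MetricSpace Z) (_ : MeasurableSpace Z),
    BorelSpace Z ∧ TopologicalSpace.SeparableSpace Z ∧ CompleteSpace Z ∧
    ∃ (φ₁ : X₁ → Z) (φ₂ : X₂ → Z), Isometry φ₁ ∧ Isometry φ₂ ∧
      d = prohorovDistSum (μ₁.map (Prod.map φ₁ id)) (μ₂.map (Prod.map φ₂ id))}

/-- The (unmarked) Gromov-Prohorov distance between two metric measure spaces. -/
def uGPDist {X₁ X₂ : Type} [MetricSpace X₁] [MetricSpace X₂]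
    [MeasurableSpace X₁] [MeasurableSpace X₂]
    (ν₁ : Measure X₁) (ν₂ : Measure X₂) : ℝ :=
  sInf {d : ℝ | ∃ (Z : Type) (_ : MetricSpace Z) (_ : MeasurableSpace Z),
    BorelSpace Z ∧ TopologicalSpace.SeparableSpace Z ∧ CompleteSpace Z ∧
    ∃ (φ₁ : X₁ → Z) (φ₂ : X₂ → Z), Isometry φ₁ ∧ Isometry φ₂ ∧
      d = prohorovDist (ν₁.map φ₁) (ν₂.map φ₂)}

/-- Weak convergence of a sequence of (Borel) measures. -/
def WeakConvSeq {Ω : Type} [TopologicalSpace Ω] [MeasurableSpace Ω]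
    (μs : ℕ → Measure Ω) (μ : Measure Ω) : Prop :=
  ∀ f : Ω →ᵇ ℝ, Tendsto (fun n => ∫ x, f x ∂(μs n)) atTop (𝓝 (∫ x, f x ∂μ))

/-- A function on the marked distance matrix space depends only on the distance
entries `r_{kl}` with `k < l ≤ n` and the first `n` mark coordinates. -/
def DependsOnFirst {I : Type} (n : ℕ) (φ : MDM I → ℝ) : Prop :=
  ∀ a b : MDM I, (∀ p : PairIdx, p.1.2 < n → a.1 p = b.1 p) →
    (∀ k < n, a.2 k = b.2 k) → φ a = φ b

/-- The shift `ρ₁ⁿ` on the marked distance matrix space. -/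
def shiftBy {I : Type} (n : ℕ) : MDM I → MDM I :=
  fun x => (fun p => x.1 ⟨(p.1.1 + n, p.1.2 + n), Nat.add_lt_add_right p.2 n⟩,
    fun k => x.2 (k + n))


/-- The (unmarked) distance matrix distribution of an mm-space `(X, r, ν)`, given the
product measure `νinf = ν^⊗ℕ` on `X^ℕ`. -/
def uDMD {X : Type} [PseudoMetricSpace X] [MeasurableSpace X] (νinf : Measure (ℕ → X)) :
    Measure (PairIdx → ℝ≥0) :=
  νinf.map (fun s => fun p : PairIdx => nndist (s p.1.1) (s p.1.2))


/-! ### Auxiliary material for the proof -/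

set_option maxHeartbeats 1000000 in
set_option synthInstance.maxHeartbeats 400000 in
/-- dummy -/
lemma aux_dummy : True := trivial

set_option synthInstance.maxHeartbeats 400000

open scoped ENNReal

open ProbabilityTheory in
/-- real version of an `ℝ≥0`-valued bounded continuous function -/
def BCFtoReal {β : Type*} [TopologicalSpace β] (f : β →ᵇ ℝ≥0) : β →ᵇ ℝ where
  toFun := fun x => (f x : ℝ)
  continuous_toFun := NNReal.continuous_coe.comp f.continuous
  map_bounded' := by
    obtain ⟨C, hC⟩ := f.map_bounded'
    exact ⟨C, fun x y => by simpa [NNReal.dist_eq, Real.dist_eq] using hC x y⟩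

@[simp] lemma BCFtoReal_apply {β : Type*} [TopologicalSpace β] (f : β →ᵇ ℝ≥0) (x : β) :
    BCFtoReal f x = (f x : ℝ) := rfl

section prodmeas

variable {α : Type} [MeasurableSpace α] {μ : Measure α} [IsProbabilityMeasure μ]
  {μinf : Measure (ℕ → α)}

lemma prodMeas_map_eval (hμ : IsProductMeasure μ μinf) (k : ℕ) :
    μinf.map (fun s => s k) = μ := by
  ext A hA
  rw [Measure.map_apply (measurable_pi_apply k) hA]
  have h2 := hμ.2 (k+1) (fun i => if i = k then A else Set.univ)
    (fun i => by by_cases h : i = k <;> simp [h, hA])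
  have : {s : ℕ → α | ∀ i < k + 1, s i ∈ (fun i => if i = k then A else Set.univ) i}
      = (fun s : ℕ → α => s k) ⁻¹' A := by
    ext s
    constructor
    · intro hs
      have := hs k (Nat.lt_succ_self k)
      simpa using this
    · intro hs i hi
      by_cases h : i = k
      · subst h; simpa using hs
      · simp [h]
  rw [this] at h2
  rw [h2, Finset.prod_eq_single k (fun i _ hi => by simp [hi]) (by simp)]
  simp

lemma prodMeas_iIndep (hμ : IsProductMeasure μ μinf) :
    ProbabilityTheory.iIndepFun (fun k (s : ℕ → α) => s k) μinf := by
  rw [ProbabilityTheory.iIndepFun_iff_measure_inter_preimage_eq_mul]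
  intro S sets hsets
  classical
  set n := S.sup id + 1 with hn
  have hSn : ∀ i ∈ S, i < n := fun i hi =>
    Nat.lt_succ_of_le (Finset.le_sup (f := id) hi)
  set A : ℕ → Set α := fun i => if i ∈ S then sets i else Set.univ with hA
  have hAm : ∀ i, MeasurableSet (A i) := by
    intro i
    by_cases h : i ∈ S
    · simpa [hA, h] using hsets i h
    · simp [hA, h]
  have key := hμ.2 n A hAm
  have hset : {s : ℕ → α | ∀ i < n, s i ∈ A i} = ⋂ i ∈ S, (fun s : ℕ → α => s i) ⁻¹' sets i := by
    ext s
    simp only [Set.mem_setOf_eq, Set.mem_iInter, Set.mem_preimage]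
    constructor
    · intro hs i hi
      have := hs i (hSn i hi)
      simpa [hA, hi] using this
    · intro hs i _
      by_cases h : i ∈ S
      · simpa [hA, h] using hs i h
      · simp [hA, h]
  have hprod : ∏ i ∈ Finset.range n, μ (A i) = ∏ i ∈ S, μ (sets i) := by
    rw [← Finset.prod_subset (fun i hi => Finset.mem_range.2 (hSn i hi))
      (fun i _ hi => by simp [hA, hi])]
    exact Finset.prod_congr rfl (fun i hi => by simp [hA, hi])
  rw [hset] at key
  rw [key, hprod]
  refine Finset.prod_congr rfl (fun i hi => ?_)
  rw [← prodMeas_map_eval hμ i, Measure.map_apply (measurable_pi_apply i) (hsets i hi)]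

section mmetric
variable [MetricSpace α] [BorelSpace α]

lemma slln_bcf (hμ : IsProductMeasure μ μinf) (f : α →ᵇ ℝ) :
    ∀ᵐ s ∂μinf, Tendsto (fun n => (∑ i ∈ Finset.range n, f (s i)) / (n : ℝ))
      atTop (𝓝 (∫ x, f x ∂μ)) := by
  haveI : IsProbabilityMeasure μinf := hμ.1
  have hfm : Measurable f := f.continuous.measurable
  set Z : ℕ → (ℕ → α) → ℝ := fun i s => f (s i) with hZ
  have hint : Integrable (Z 0) μinf := by
    have h1 : Integrable (fun x => f x) (μinf.map (fun s : ℕ → α => s 0)) := by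
      rw [prodMeas_map_eval hμ 0]; exact f.integrable μ
    exact (integrable_map_measure f.continuous.measurable.aestronglyMeasurable
      (measurable_pi_apply 0).aemeasurable).mp h1
  have hindep : Pairwise (Function.onFun (ProbabilityTheory.IndepFun · · μinf) Z) := by
    intro i j hij
    exact ((prodMeas_iIndep hμ).indepFun hij).comp hfm hfm
  have hident : ∀ i, ProbabilityTheory.IdentDistrib (Z i) (Z 0) μinf μinf := by
    intro i
    refine ProbabilityTheory.IdentDistrib.comp ?_ hfm
    exact ⟨(measurable_pi_apply i).aemeasurable, (measurable_pi_apply 0).aemeasurable,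
      by rw [prodMeas_map_eval hμ i, prodMeas_map_eval hμ 0]⟩
  have key := ProbabilityTheory.strong_law_ae_real Z hint hindep hident
  have hE : ∫ x, Z 0 x ∂μinf = ∫ x, f x ∂μ := by
    show ∫ s, f ((fun s : ℕ → α => s 0) s) ∂μinf = _
    rw [← integral_map (measurable_pi_apply 0).aemeasurable
      f.continuous.measurable.aestronglyMeasurable, prodMeas_map_eval hμ 0]
  rw [hE] at key
  exact key

end mmetric
end prodmeas

lemma ae_extract {β : Type} [MeasurableSpace β] {ν : Measure β} {p : β → Prop}
    (h : ∀ᵐ x ∂ν, p x) :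
    ∃ M : Set β, MeasurableSet M ∧ ν Mᶜ = 0 ∧ ∀ x ∈ M, p x := by
  refine ⟨(toMeasurable ν {x | ¬ p x})ᶜ, (measurableSet_toMeasurable ν _).compl, ?_, ?_⟩
  · rw [compl_compl, measure_toMeasurable]
    exact h
  · intro x hx
    by_contra hpx
    exact hx (subset_toMeasurable ν _ hpx)

section typical

variable {α : Type} [MeasurableSpace α] {μ : Measure α} [IsProbabilityMeasure μ]
  {μinf : Measure (ℕ → α)}
variable [MetricSpace α] [TopologicalSpace.SeparableSpace α] [BorelSpace α] [Nonempty α]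

/-- The empirical measure of the first `n+1` points of a sequence. -/
def empMeas (s : ℕ → α) (n : ℕ) : Measure α :=
  (((n+1 : ℕ) : ℝ≥0∞))⁻¹ • ∑ i ∈ Finset.range (n+1), Measure.dirac (s i)

instance empMeas_prob (s : ℕ → α) (n : ℕ) : IsProbabilityMeasure (empMeas s n) := by
  constructor
  simp only [empMeas, Measure.smul_apply, Measure.finset_sum_apply, measure_univ, smul_eq_mul]
  rw [Finset.sum_const, Finset.card_range, nsmul_eq_mul, mul_one]
  exact ENNReal.inv_mul_cancel (by positivity) (ENNReal.natCast_ne_top _)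

omit [TopologicalSpace.SeparableSpace α] [Nonempty α] in
lemma empMeas_lintegral (s : ℕ → α) (n : ℕ) {φ : α → ℝ≥0∞} (hφ : Measurable φ) :
    ∫⁻ x, φ x ∂(empMeas s n) = (((n+1:ℕ) : ℝ≥0∞))⁻¹ * ∑ i ∈ Finset.range (n+1), φ (s i) := by
  rw [empMeas, lintegral_smul_measure, lintegral_finset_sum_measure]
  simp [lintegral_dirac' _ hφ]

omit [TopologicalSpace.SeparableSpace α] [Nonempty α] in
lemma empMeas_integral (s : ℕ → α) (n : ℕ) (f : α →ᵇ ℝ) :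
    ∫ x, f x ∂(empMeas s n) = (∑ i ∈ Finset.range (n+1), f (s i)) / ((n+1 : ℕ) : ℝ) := by
  rw [empMeas, integral_smul_measure, integral_finset_sum_measure
    (fun i _ => f.integrable _)]
  simp only [integral_dirac]
  rw [ENNReal.toReal_inv, ENNReal.toReal_natCast, smul_eq_mul, inv_mul_eq_div]

/-- Almost every sequence drawn from the product measure is "typical": the empirical
averages of every bounded continuous function converge to its integral. -/
lemma exists_typical (hμ : IsProductMeasure μ μinf) :
    ∃ T : Set (ℕ → α), MeasurableSet T ∧ μinf Tᶜ = 0 ∧ ∀ s ∈ T, ∀ f : α →ᵇ ℝ,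
      Tendsto (fun n => (∑ i ∈ Finset.range n, f (s i)) / (n : ℝ)) atTop (𝓝 (∫ x, f x ∂μ)) := by
  classical
  haveI : IsProbabilityMeasure μinf := hμ.1
  set u : ℕ → α := TopologicalSpace.denseSeq α with hu
  have hdense : DenseRange u := TopologicalSpace.denseRange_denseSeq α
  set V : Finset (ℕ × ℚ) → Set α := fun j => ⋃ p ∈ j, Metric.ball (u p.1) (p.2 : ℝ) with hV
  have hVopen : ∀ j, IsOpen (V j) := fun j =>
    isOpen_biUnion (fun p _ => Metric.isOpen_ball)
  have hVc : ∀ j, IsClosed (V j)ᶜ := fun j => (hVopen j).isClosed_compl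
  set g : Finset (ℕ × ℚ) → ℕ → (α →ᵇ ℝ) := fun j k => BCFtoReal ((hVc j).apprSeq k) with hg
  have hext : ∀ j k, ∃ M : Set (ℕ → α), MeasurableSet M ∧ μinf Mᶜ = 0 ∧ ∀ s ∈ M,
      Tendsto (fun n => (∑ i ∈ Finset.range n, g j k (s i)) / (n : ℝ)) atTop
        (𝓝 (∫ x, g j k x ∂μ)) :=
    fun j k => ae_extract (slln_bcf hμ (g j k))
  choose M hMm hMc hMtd using hext
  refine ⟨⋂ j, ⋂ k, M j k, MeasurableSet.iInter (fun j => MeasurableSet.iInter (fun k => hMm j k)),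
    ?_, ?_⟩
  · rw [Set.compl_iInter]
    refine measure_iUnion_null (fun j => ?_)
    rw [Set.compl_iInter]
    exact measure_iUnion_null (fun k => hMc j k)
  intro s hs f
  have hsT : ∀ j k, Tendsto (fun n => (∑ i ∈ Finset.range n, g j k (s i)) / (n : ℝ)) atTop
      (𝓝 (∫ x, g j k x ∂μ)) := by
    intro j k
    exact hMtd j k s (by exact Set.mem_iInter.1 (Set.mem_iInter.1 hs j) k)
  have step1 : ∀ j : Finset (ℕ × ℚ),
      μ (V j) ≤ atTop.liminf (fun n => empMeas s n (V j)) := by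
    intro j
    have key : ∀ k : ℕ, 1 - ∫⁻ x, ((hVc j).apprSeq k x : ℝ≥0∞) ∂μ
        ≤ atTop.liminf (fun n => empMeas s n (V j)) := by
      intro k
      have hmk : Measurable (fun x => ((hVc j).apprSeq k x : ℝ≥0∞)) :=
        (ENNReal.continuous_coe.comp ((hVc j).apprSeq k).continuous).measurable
      have hint : Integrable (fun x => (((hVc j).apprSeq k x : ℝ≥0) : ℝ)) μ :=
        (g j k).integrable μ
      have hconv : Tendsto (fun n => ∫⁻ x, ((hVc j).apprSeq k x : ℝ≥0∞) ∂(empMeas s n))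
          atTop (𝓝 (∫⁻ x, ((hVc j).apprSeq k x : ℝ≥0∞) ∂μ)) := by
        have hrepr : ∀ n, ∫⁻ x, ((hVc j).apprSeq k x : ℝ≥0∞) ∂(empMeas s n)
            = ENNReal.ofReal ((∑ i ∈ Finset.range (n+1), g j k (s i)) / ((n+1 : ℕ) : ℝ)) := by
          intro n
          rw [empMeas_lintegral s n hmk]
          simp only [hg, BCFtoReal_apply]
          rw [ENNReal.ofReal_div_of_pos (by positivity),
            ENNReal.ofReal_sum_of_nonneg (fun i _ => NNReal.coe_nonneg _)]
          simp only [ENNReal.ofReal_coe_nnreal, ENNReal.ofReal_natCast]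
          rw [ENNReal.div_eq_inv_mul]
        simp only [hrepr]
        have h2 : Tendsto (fun n : ℕ => (∑ i ∈ Finset.range (n+1), g j k (s i)) / ((n+1 : ℕ) : ℝ))
            atTop (𝓝 (∫ x, g j k x ∂μ)) := by
          have := hsT j k
          rw [← tendsto_add_atTop_iff_nat 1] at this
          simpa using this
        have h3 := (ENNReal.continuous_ofReal.tendsto _).comp h2
        simp only [hg, BCFtoReal_apply] at h3
        rw [← lintegral_coe_eq_integral _ hint] at h3
        exact h3
      have hptw : ∀ n, (1:ℝ≥0∞) ≤ empMeas s n (V j)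
          + ∫⁻ x, ((hVc j).apprSeq k x : ℝ≥0∞) ∂(empMeas s n) := by
        intro n
        calc (1:ℝ≥0∞) = ∫⁻ _, 1 ∂(empMeas s n) := by simp
          _ ≤ ∫⁻ x, ((V j).indicator 1 x + ((hVc j).apprSeq k x : ℝ≥0∞)) ∂(empMeas s n) := by
              refine lintegral_mono (fun x => ?_)
              by_cases hx : x ∈ V j
              · simp [Set.indicator_of_mem hx]
              · rw [Set.indicator_of_notMem hx]
                simp [HasOuterApproxClosed.apprSeq_apply_eq_one (hVc j) k hx]
          _ = (empMeas s n) (V j) + ∫⁻ x, ((hVc j).apprSeq k x : ℝ≥0∞) ∂(empMeas s n) := by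
              rw [lintegral_add_left (measurable_one.indicator (hVopen j).measurableSet),
                lintegral_indicator_one (hVopen j).measurableSet]
      have h4 : ∀ n, 1 - ∫⁻ x, ((hVc j).apprSeq k x : ℝ≥0∞) ∂(empMeas s n)
          ≤ empMeas s n (V j) := fun n => tsub_le_iff_right.mpr (hptw n)
      have h5 : Tendsto (fun n => 1 - ∫⁻ x, ((hVc j).apprSeq k x : ℝ≥0∞) ∂(empMeas s n))
          atTop (𝓝 (1 - ∫⁻ x, ((hVc j).apprSeq k x : ℝ≥0∞) ∂μ)) :=
        (ENNReal.continuous_sub_left ENNReal.one_ne_top).tendsto _ |>.comp hconv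
      calc 1 - ∫⁻ x, ((hVc j).apprSeq k x : ℝ≥0∞) ∂μ
          = atTop.liminf (fun n => 1 - ∫⁻ x, ((hVc j).apprSeq k x : ℝ≥0∞) ∂(empMeas s n)) :=
            (h5.liminf_eq).symm
        _ ≤ atTop.liminf (fun n => empMeas s n (V j)) :=
            liminf_le_liminf (Eventually.of_forall h4)
    have happr := HasOuterApproxClosed.tendsto_lintegral_apprSeq (hVc j) μ
    have h6 : Tendsto (fun k => 1 - ∫⁻ x, ((hVc j).apprSeq k x : ℝ≥0∞) ∂μ) atTop
        (𝓝 (1 - μ ((V j)ᶜ))) :=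
      (ENNReal.continuous_sub_left ENNReal.one_ne_top).tendsto _ |>.comp happr
    have h7 : 1 - μ ((V j)ᶜ) = μ (V j) := by
      rw [prob_compl_eq_one_sub (hVopen j).measurableSet]
      exact ENNReal.sub_sub_cancel ENNReal.one_ne_top prob_le_one
    rw [← h7]
    exact le_of_tendsto h6 (Eventually.of_forall key)
  have step2 : ∀ G : Set α, IsOpen G → μ G ≤ atTop.liminf (fun n => empMeas s n G) := by
    intro G hG
    rcases eq_or_ne (μ G) 0 with h0 | h0
    · simp [h0]
    set P : Set (ℕ × ℚ) := {p | 0 < (p.2 : ℝ) ∧ Metric.ball (u p.1) (p.2 : ℝ) ⊆ G} with hP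
    have hGcov : G = ⋃ p ∈ P, Metric.ball (u p.1) (p.2 : ℝ) := by
      apply Set.Subset.antisymm
      · intro x hx
        obtain ⟨ε, hε, hball⟩ := Metric.isOpen_iff.1 hG x hx
        obtain ⟨q, hq0, hqε⟩ := exists_rat_btwn (show (0:ℝ) < ε/2 by linarith)
        obtain ⟨i, hi⟩ := Metric.denseRange_iff.1 hdense x (q : ℝ) (by exact_mod_cast hq0)
        have hmem : x ∈ Metric.ball (u i) (q:ℝ) := Metric.mem_ball.2 hi
        have hsub : Metric.ball (u i) (q:ℝ) ⊆ G := by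
          intro y hy
          apply hball
          refine Metric.mem_ball.2 ?_
          calc dist y x ≤ dist y (u i) + dist x (u i) := dist_triangle_right _ _ _
            _ < (q:ℝ) + (q:ℝ) := add_lt_add (Metric.mem_ball.1 hy) hi
            _ < ε := by linarith
        exact Set.mem_biUnion (show (i, q) ∈ P from ⟨by exact_mod_cast hq0, hsub⟩) hmem
      · intro x hx
        obtain ⟨p, hp, hxp⟩ := Set.mem_iUnion₂.1 hx
        exact hp.2 hxp
    have hGne : G.Nonempty := nonempty_of_measure_ne_zero h0
    have hPne : P.Nonempty := by
      obtain ⟨x, hx⟩ := hGne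
      have := hGcov ▸ hx
      obtain ⟨p, hp, -⟩ := Set.mem_iUnion₂.1 this
      exact ⟨p, hp⟩
    obtain ⟨e, hPe⟩ := (Set.to_countable P).exists_eq_range hPne
    set W : ℕ → Set α := fun m => V ((Finset.range m).image e) with hW
    have hWV : ∀ m, W m = ⋃ r ∈ Finset.range m, Metric.ball (u (e r).1) ((e r).2 : ℝ) := by
      intro m
      simp only [hW, hV]
      exact Finset.set_biUnion_finset_image
    have heP : ∀ r, e r ∈ P := fun r => hPe ▸ Set.mem_range_self r
    have hWsubG : ∀ m, W m ⊆ G := by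
      intro m
      rw [hWV m]
      exact Set.iUnion₂_subset (fun r _ => (heP r).2)
    have hWmono : Monotone W := by
      intro a b hab
      rw [hWV a, hWV b]
      refine Set.iUnion₂_subset (fun r hr => ?_)
      have hrb : r ∈ Finset.range b :=
        Finset.mem_range.2 (lt_of_lt_of_le (Finset.mem_range.1 hr) hab)
      exact Set.subset_biUnion_of_mem (u := fun r => Metric.ball (u (e r).1) ((e r).2 : ℝ)) hrb
    have hWunion : ⋃ m, W m = G := by
      apply Set.Subset.antisymm (Set.iUnion_subset hWsubG)
      intro x hx
      have := hGcov ▸ hx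
      obtain ⟨p, hp, hxp⟩ := Set.mem_iUnion₂.1 this
      have hp' : p ∈ Set.range e := by rw [← hPe]; exact hp
      obtain ⟨r, hr⟩ := hp'
      refine Set.mem_iUnion.2 ⟨r+1, ?_⟩
      rw [hWV (r+1)]
      exact Set.mem_biUnion (Finset.mem_range.2 (Nat.lt_succ_self r)) (by rw [hr]; exact hxp)
    have htm : Tendsto (fun m => μ (W m)) atTop (𝓝 (μ G)) := by
      have := tendsto_measure_iUnion_atTop (μ := μ) hWmono
      rwa [hWunion] at this
    refine le_of_tendsto htm (Eventually.of_forall (fun m => ?_))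
    calc μ (W m) ≤ atTop.liminf (fun n => empMeas s n (W m)) := step1 _
      _ ≤ atTop.liminf (fun n => empMeas s n G) :=
          liminf_le_liminf (Eventually.of_forall (fun n => measure_mono (hWsubG m)))
  set pms : ℕ → ProbabilityMeasure α := fun n => ⟨empMeas s n, inferInstance⟩ with hpms
  set μpm : ProbabilityMeasure α := ⟨μ, inferInstance⟩ with hμpm
  have h_opens : ∀ G, IsOpen G → μpm G ≤ atTop.liminf (fun n => pms n G) := by
    intro G hG
    have hENN := step2 G hG
    have aux : ENNReal.ofNNReal (atTop.liminf (fun n => pms n G)) =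
        atTop.liminf (ENNReal.ofNNReal ∘ fun n => pms n G) := by
      refine Monotone.map_liminf_of_continuousAt (F := atTop) ENNReal.coe_mono (fun n => pms n G)
        ENNReal.continuous_coe.continuousAt ?_ ?_
      · exact IsBoundedUnder.isCoboundedUnder_ge
          ⟨1, eventually_map.2 (Eventually.of_forall
            (fun n => ProbabilityMeasure.apply_le_one _ _))⟩
      · exact ⟨0, eventually_map.2 (Eventually.of_forall (fun n => zero_le))⟩
    rw [← ENNReal.coe_le_coe, aux]
    have h1 : (ENNReal.ofNNReal (μpm G)) = μ G :=
      ProbabilityMeasure.ennreal_coeFn_eq_coeFn_toMeasure μpm G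
    rw [h1]
    refine hENN.trans (le_of_eq ?_)
    congr 1
    funext n
    exact (ProbabilityMeasure.ennreal_coeFn_eq_coeFn_toMeasure (pms n) G).symm
  have htd := MeasureTheory.tendsto_of_forall_isOpen_le_liminf h_opens
  have hi := ProbabilityMeasure.tendsto_iff_forall_integral_tendsto.mp htd f
  have hrepr : ∀ n, ∫ x, f x ∂((pms n : Measure α)) =
      (∑ i ∈ Finset.range (n+1), f (s i)) / ((n+1 : ℕ) : ℝ) := fun n => empMeas_integral s n f
  rw [← tendsto_add_atTop_iff_nat 1]
  simp only [hrepr] at hi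
  simpa [show (μpm : Measure α) = μ from rfl] using hi

end typical

section hits
variable {α : Type} [MeasurableSpace α] [MetricSpace α] [BorelSpace α]
  {μ : Measure α} [IsProbabilityMeasure μ]

/-- A sequence whose empirical averages converge for all bounded continuous functions
visits every open set of positive measure. -/
lemma typical_hits {s : ℕ → α}
    (hconc : ∀ f : α →ᵇ ℝ,
      Tendsto (fun n => (∑ i ∈ Finset.range n, f (s i)) / (n : ℝ)) atTop (𝓝 (∫ x, f x ∂μ)))
    {G : Set α} (hG : IsOpen G) (h0 : μ G ≠ 0) : ∃ i, s i ∈ G := by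
  by_contra hno
  push_neg at hno
  have hGc : IsClosed Gᶜ := hG.isClosed_compl
  have happr := HasOuterApproxClosed.tendsto_lintegral_apprSeq hGc μ
  have hlt : μ Gᶜ < 1 := by
    rw [prob_compl_eq_one_sub hG.measurableSet]
    exact ENNReal.sub_lt_self ENNReal.one_ne_top one_ne_zero h0
  obtain ⟨k, hk⟩ := (happr.eventually_lt_const hlt).exists
  set g : α →ᵇ ℝ := BCFtoReal (hGc.apprSeq k) with hgdef
  have hint : Integrable (fun x => ((hGc.apprSeq k x : ℝ≥0) : ℝ)) μ := g.integrable μ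
  have hcoe : ∫⁻ x, ((hGc.apprSeq k x : ℝ≥0) : ℝ≥0∞) ∂μ = ENNReal.ofReal (∫ x, g x ∂μ) := by
    rw [lintegral_coe_eq_integral _ hint]
    rfl
  have hglt : ∫ x, g x ∂μ < 1 := by
    have := hcoe ▸ hk
    have h1 : ENNReal.ofReal (∫ x, g x ∂μ) < ENNReal.ofReal 1 := by simpa using this
    by_contra hcon
    push_neg at hcon
    exact absurd (ENNReal.ofReal_le_ofReal hcon) (not_le.2 h1)
  set f : α →ᵇ ℝ := (1 : α →ᵇ ℝ) - g with hfdef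
  have hf0 : ∀ i, f (s i) = 0 := by
    intro i
    have : (hGc.apprSeq k) (s i) = 1 :=
      HasOuterApproxClosed.apprSeq_apply_eq_one hGc k (hno i)
    simp [hfdef, hgdef, this]
  have h1 := hconc f
  have h2 : Tendsto (fun n => (∑ i ∈ Finset.range n, f (s i)) / (n : ℝ)) atTop (𝓝 0) := by
    have : (fun n => (∑ i ∈ Finset.range n, f (s i)) / (n : ℝ)) = fun _ => 0 := by
      funext n; simp [hf0]
    rw [this]
    exact tendsto_const_nhds
  have h3 : ∫ x, f x ∂μ = 0 := tendsto_nhds_unique h1 h2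
  have h4 : ∫ x, f x ∂μ = 1 - ∫ x, g x ∂μ := by
    have heq : ∀ x, f x = (1:ℝ) - g x := fun x => rfl
    calc ∫ x, f x ∂μ = ∫ x, ((1:ℝ) - g x) ∂μ := by simp only [heq]
      _ = ∫ _, (1:ℝ) ∂μ - ∫ x, g x ∂μ := integral_sub (integrable_const _) (g.integrable μ)
      _ = 1 - ∫ x, g x ∂μ := by simp
  rw [h4] at h3
  linarith
end hits

section support
variable {α : Type} [MetricSpace α] [MeasurableSpace α] [BorelSpace α]
  [TopologicalSpace.SeparableSpace α]

lemma not_mem_metricSupport {μ : Measure α} {x : α} (hx : x ∉ metricSupport μ) :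
    ∃ ε > 0, μ (Metric.ball x ε) = 0 := by
  simp only [metricSupport, Set.mem_setOf_eq, not_forall] at hx
  obtain ⟨ε, hε, hball⟩ := hx
  exact ⟨ε, hε, le_zero_iff.1 (not_lt.1 hball)⟩

lemma isClosed_metricSupport (μ : Measure α) : IsClosed (metricSupport μ) := by
  rw [← isOpen_compl_iff, Metric.isOpen_iff]
  intro x hx
  obtain ⟨ε, hε, hμball⟩ := not_mem_metricSupport hx
  refine ⟨ε/2, by linarith, ?_⟩
  intro y hy
  simp only [metricSupport, Set.mem_compl_iff, Set.mem_setOf_eq, not_forall]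
  refine ⟨ε/2, ⟨by linarith, ?_⟩⟩
  intro hpos
  have hsub : Metric.ball y (ε/2) ⊆ Metric.ball x ε := by
    intro z hz
    rw [Metric.mem_ball] at *
    calc dist z x ≤ dist z y + dist y x := dist_triangle _ _ _
      _ < ε/2 + ε/2 := add_lt_add hz hy
      _ = ε := by ring
  have : μ (Metric.ball y (ε/2)) ≤ μ (Metric.ball x ε) := measure_mono hsub
  rw [hμball] at this
  exact absurd (le_antisymm this zero_le) (ne_of_gt hpos)

lemma metricSupport_compl_null [SecondCountableTopology α] (μ : Measure α) :
    μ (metricSupport μ)ᶜ = 0 := by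
  apply measure_null_of_locally_null
  intro x hx
  obtain ⟨ε, hε, hμball⟩ := not_mem_metricSupport hx
  exact ⟨Metric.ball x ε, nhdsWithin_le_nhds (Metric.ball_mem_nhds x hε), hμball⟩
end support

section matching
open ProbabilityTheory

lemma exists_matching {β E : Type} [MeasurableSpace β] [StandardBorelSpace β] [Nonempty β]
    [MeasurableSpace E] [TopologicalSpace E] [TopologicalSpace.MetrizableSpace E]
    [SecondCountableTopology E] [BorelSpace E]
    (P : Measure β) [IsProbabilityMeasure P] {g : β → E} (hg : Measurable g)
    {T : Set β} (hT : MeasurableSet T) (hT1 : P Tᶜ = 0) :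
    ∃ N : Set E, MeasurableSet N ∧ (P.map g) Nᶜ = 0 ∧ ∀ m ∈ N, ∃ t ∈ T, g t = m := by
  set ρ : Measure (E × β) := P.map (fun t => (g t, t)) with hρ
  have hpair : Measurable (fun t : β => (g t, t)) := hg.prodMk measurable_id
  haveI : IsProbabilityMeasure ρ := Measure.isProbabilityMeasure_map hpair.aemeasurable
  have hfst : ρ.fst = P.map g := by
    rw [hρ, Measure.fst, Measure.map_map measurable_fst hpair]
    rfl
  set κ := ρ.condKernel with hκ
  have hdis : ρ.fst ⊗ₘ κ = ρ := ρ.disintegrate κ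
  set S : Set (E × β) := {q | g q.2 = q.1 ∧ q.2 ∈ T} with hS
  have hSm : MeasurableSet S := by
    refine MeasurableSet.inter ?_ (measurable_snd hT)
    exact MeasureTheory.StronglyMeasurable.measurableSet_eq_fun
      (hg.comp measurable_snd).stronglyMeasurable measurable_fst.stronglyMeasurable
  have hρS : ρ S = 1 := by
    rw [hρ, Measure.map_apply hpair hSm]
    have : (fun t : β => (g t, t)) ⁻¹' S = T := by
      ext t; simp [hS]
    rw [this]
    exact prob_compl_eq_zero_iff hT |>.1 hT1
  set F : E → ℝ≥0∞ := fun m => κ m (Prod.mk m ⁻¹' S) with hF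
  have hFm : Measurable F := Kernel.measurable_kernel_prodMk_left hSm
  have hF1 : ∀ m, F m ≤ 1 := fun m => prob_le_one
  have hintF : ∫⁻ m, F m ∂(ρ.fst) = 1 := by
    have := Measure.compProd_apply hSm (μ := ρ.fst) (κ := κ)
    rw [hdis, hρS] at this
    exact this.symm
  have h0 : ∫⁻ m, (1 - F m) ∂(ρ.fst) = 0 := by
    rw [lintegral_sub hFm (by rw [hintF]; exact ENNReal.one_ne_top) (Eventually.of_forall hF1)]
    rw [hintF]
    simp
  have hae : ∀ᵐ m ∂(ρ.fst), F m = 1 := by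
    have := (lintegral_eq_zero_iff (measurable_const.sub hFm)).1 h0
    filter_upwards [this] with m hm
    have : 1 - F m = 0 := hm
    exact le_antisymm (hF1 m) (tsub_eq_zero_iff_le.1 this)
  refine ⟨{m | F m = 1}, hFm (measurableSet_singleton 1), ?_, ?_⟩
  · rw [← hfst]
    exact ae_iff.1 hae
  · intro m hm
    have hne : F m ≠ 0 := by
      have : F m = 1 := hm
      rw [this]; exact one_ne_zero
    obtain ⟨t, ht⟩ := nonempty_of_measure_ne_zero hne
    exact ⟨t, ht.2, ht.1⟩
end matching

section cylinder
variable {I : Type} [MetricSpace I] [TopologicalSpace.SeparableSpace I]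
  [MeasurableSpace I] [BorelSpace I]

lemma measurable_of_coords {γ : Type} {mγ : MeasurableSpace γ} {I : Type} [MeasurableSpace I]
    (f : γ → MDM I) (h1 : ∀ p, Measurable fun x => (f x).1 p)
    (h2 : ∀ k, Measurable fun x => (f x).2 k) : Measurable f :=
  Measurable.prodMk (measurable_pi_lambda _ h1) (measurable_pi_lambda _ h2)

/-- The finite-dimensional projection of the marked distance matrix space. -/
def projn (I : Type) (n : ℕ) : MDM I → ({p : PairIdx // p.1.2 < n} → ℝ≥0) × (Fin n → I) :=
  fun x => (fun q => x.1 q.1, fun k => x.2 k)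

lemma continuous_projn (n : ℕ) : Continuous (projn I n) := by
  refine Continuous.prodMk ?_ ?_
  · exact continuous_pi (fun q => (continuous_apply q.1).comp continuous_fst)
  · exact continuous_pi (fun k => (continuous_apply (k : ℕ)).comp continuous_snd)

lemma measurable_projn (n : ℕ) : Measurable (projn I n) := by
  haveI : SecondCountableTopology I := UniformSpace.secondCountable_of_separable I
  exact (continuous_projn n).measurable

def resMap (I : Type) {m n : ℕ} (h : m ≤ n) :
    ({p : PairIdx // p.1.2 < n} → ℝ≥0) × (Fin n → I) →
    ({p : PairIdx // p.1.2 < m} → ℝ≥0) × (Fin m → I) :=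
  fun y => (fun q => y.1 ⟨q.1, lt_of_lt_of_le q.2 h⟩, fun k => y.2 (Fin.castLE h k))

omit [MetricSpace I] [TopologicalSpace.SeparableSpace I] [BorelSpace I] in
lemma measurable_resMap {m n : ℕ} (h : m ≤ n) : Measurable (resMap I h) := by
  refine Measurable.prodMk ?_ ?_
  · exact measurable_pi_lambda _ (fun q => (measurable_pi_apply _).comp measurable_fst)
  · exact measurable_pi_lambda _ (fun k => (measurable_pi_apply _).comp measurable_snd)

omit [MetricSpace I] [TopologicalSpace.SeparableSpace I] [BorelSpace I] in
lemma projn_comp {m n : ℕ} (h : m ≤ n) : projn I m = resMap I h ∘ projn I n := rfl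

/-- Two probability measures on the marked distance matrix space agreeing on all bounded
continuous functions depending on finitely many coordinates are equal. -/
lemma mdm_ext (ν₁ ν₂ : Measure (MDM I)) [IsProbabilityMeasure ν₁] [IsProbabilityMeasure ν₂]
    (h : ∀ (φ : MDM I →ᵇ ℝ) (n : ℕ), DependsOnFirst n ⇑φ →
      ∫ x, φ x ∂ν₁ = ∫ x, φ x ∂ν₂) : ν₁ = ν₂ := by
  classical
  haveI : SecondCountableTopology I := UniformSpace.secondCountable_of_separable I
  have hmaps : ∀ n, ν₁.map (projn I n) = ν₂.map (projn I n) := by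
    intro n
    apply ext_of_forall_lintegral_eq_of_IsFiniteMeasure
    intro f
    set φ : MDM I →ᵇ ℝ := (BCFtoReal f).compContinuous ⟨projn I n, continuous_projn n⟩ with hφ
    have hφ_apply : ∀ x, φ x = ((f (projn I n x) : ℝ≥0) : ℝ) := fun x => rfl
    have hdep : DependsOnFirst n ⇑φ := by
      intro a b h1 h2
      rw [hφ_apply, hφ_apply]
      have : projn I n a = projn I n b := by
        refine Prod.ext ?_ ?_
        · funext q
          exact h1 q.1 q.2
        · funext k
          exact h2 (k : ℕ) k.isLt
      rw [this]
    have hint := h φ n hdep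
    have hi1 : Integrable (fun x => ((f (projn I n x) : ℝ≥0) : ℝ)) ν₁ := φ.integrable ν₁
    have hi2 : Integrable (fun x => ((f (projn I n x) : ℝ≥0) : ℝ)) ν₂ := φ.integrable ν₂
    have hfm : Measurable (fun y => (f y : ℝ≥0∞)) :=
      (ENNReal.continuous_coe.comp f.continuous).measurable
    rw [lintegral_map hfm (measurable_projn n), lintegral_map hfm (measurable_projn n)]
    rw [lintegral_coe_eq_integral _ hi1, lintegral_coe_eq_integral _ hi2]
    simp only [hφ_apply] at hint
    rw [hint]
  set C : Set (Set (MDM I)) :=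
    {E | ∃ n : ℕ, ∃ B, MeasurableSet B ∧ E = projn I n ⁻¹' B} with hC
  have hpi : IsPiSystem C := by
    rintro E1 ⟨n1, B1, hB1, rfl⟩ E2 ⟨n2, B2, hB2, rfl⟩ -
    refine ⟨max n1 n2, resMap I (le_max_left n1 n2) ⁻¹' B1 ∩ resMap I (le_max_right n1 n2) ⁻¹' B2,
      ((measurable_resMap _ hB1).inter (measurable_resMap _ hB2)), ?_⟩
    rw [Set.preimage_inter]
    rw [projn_comp (I := I) (le_max_left n1 n2), projn_comp (I := I) (le_max_right n1 n2)]
    rfl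
  have hproj : ∀ m, @Measurable (MDM I) _ (.generateFrom C) _ (projn I m) := by
    intro m B hB
    exact MeasurableSpace.measurableSet_generateFrom ⟨m, B, hB, rfl⟩
  have hgen : (inferInstance : MeasurableSpace (MDM I)) = .generateFrom C := by
    refine le_antisymm ?_ ?_
    · have hid : @Measurable (MDM I) (MDM I) (.generateFrom C) _ (fun x => x) := by
        refine measurable_of_coords _ (fun p => ?_) (fun k => ?_)
        · exact ((measurable_pi_apply (⟨p, Nat.lt_succ_self _⟩ :
            {q : PairIdx // q.1.2 < p.1.2 + 1})).comp measurable_fst).comp (hproj (p.1.2+1))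
        · exact ((measurable_pi_apply (⟨k, Nat.lt_succ_self _⟩ : Fin (k+1))).comp
            measurable_snd).comp (hproj (k+1))
      intro B hB
      have := hid hB
      simpa using this
    · refine MeasurableSpace.generateFrom_le ?_
      rintro E ⟨n, B, hB, rfl⟩
      exact measurable_projn n hB
  refine MeasureTheory.ext_of_generate_finite C hgen hpi ?_ (by simp)
  rintro E ⟨n, B, hB, rfl⟩
  rw [← Measure.map_apply (measurable_projn n) hB, ← Measure.map_apply (measurable_projn n) hB,
    hmaps n]
end cylinder


/-- if the integrals of all bounded continuous functions depending on
finitely many coordinates agree for the two marked distance matrix distributions, then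
the two marked metric measure spaces are equivalent. -/
theorem equiv_of_forall_integral_eq
    {I : Type} [MetricSpace I] [CompleteSpace I] [TopologicalSpace.SeparableSpace I]
    [MeasurableSpace I] [BorelSpace I]
    {X : Type} [MetricSpace X] [CompleteSpace X] [TopologicalSpace.SeparableSpace X]
    [MeasurableSpace X] [BorelSpace X]
    {Y : Type} [MetricSpace Y] [CompleteSpace Y] [TopologicalSpace.SeparableSpace Y]
    [MeasurableSpace Y] [BorelSpace Y]
    (μX : Measure (X × I)) [IsProbabilityMeasure μX]
    (μY : Measure (Y × I)) [IsProbabilityMeasure μY]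
    (μXinf : Measure (ℕ → X × I)) (hX : IsProductMeasure μX μXinf)
    (μYinf : Measure (ℕ → Y × I)) (hY : IsProductMeasure μY μYinf)
    (h : ∀ (φ : MDM I →ᵇ ℝ) (n : ℕ), DependsOnFirst n ⇑φ →
      ∫ x, φ x ∂(mDMD (I := I) μXinf) = ∫ x, φ x ∂(mDMD (I := I) μYinf)) :
    MMMEquiv μX μY := by
  classical
  haveI : SecondCountableTopology I := UniformSpace.secondCountable_of_separable I
  haveI : SecondCountableTopology X := UniformSpace.secondCountable_of_separable X
  haveI : SecondCountableTopology Y := UniformSpace.secondCountable_of_separable Y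
  haveI : IsProbabilityMeasure μXinf := hX.1
  haveI : IsProbabilityMeasure μYinf := hY.1
  haveI : Nonempty (X × I) := by
    obtain ⟨z, -⟩ := nonempty_of_measure_ne_zero
      (show μX Set.univ ≠ 0 by simp [measure_univ])
    exact ⟨z⟩
  haveI : Nonempty (Y × I) := by
    obtain ⟨z, -⟩ := nonempty_of_measure_ne_zero
      (show μY Set.univ ≠ 0 by simp [measure_univ])
    exact ⟨z⟩
  -- measurability of the distance matrix maps
  have hcX : Continuous (distMatMap X I) := by
    refine Continuous.prodMk (continuous_pi (fun p => ?_)) (continuous_pi (fun k => ?_))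
    · exact Continuous.nndist
        (continuous_fst.comp (continuous_apply p.1.1))
        (continuous_fst.comp (continuous_apply p.1.2))
    · exact continuous_snd.comp (continuous_apply k)
  have hcY : Continuous (distMatMap Y I) := by
    refine Continuous.prodMk (continuous_pi (fun p => ?_)) (continuous_pi (fun k => ?_))
    · exact Continuous.nndist
        (continuous_fst.comp (continuous_apply p.1.1))
        (continuous_fst.comp (continuous_apply p.1.2))
    · exact continuous_snd.comp (continuous_apply k)
  have hmX : Measurable (distMatMap X I) := hcX.measurable
  have hmY : Measurable (distMatMap Y I) := hcY.measurable
  haveI : IsProbabilityMeasure (mDMD (I := I) μXinf) :=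
    Measure.isProbabilityMeasure_map hmX.aemeasurable
  haveI : IsProbabilityMeasure (mDMD (I := I) μYinf) :=
    Measure.isProbabilityMeasure_map hmY.aemeasurable
  -- the marked distance matrix distributions are equal
  have hνeq : mDMD (I := I) μXinf = mDMD (I := I) μYinf := mdm_ext _ _ h
  -- supports
  set SX : Set X := metricSupport (μX.map Prod.fst) with hSXdef
  set SY : Set Y := metricSupport (μY.map Prod.fst) with hSYdef
  have hSXclosed : IsClosed SX := isClosed_metricSupport _
  have hSYclosed : IsClosed SY := isClosed_metricSupport _
  have hμXS : μX {z : X × I | z.1 ∉ SX} = 0 := by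
    have h1 : (μX.map Prod.fst) SXᶜ = 0 := metricSupport_compl_null _
    rw [Measure.map_apply measurable_fst hSXclosed.measurableSet.compl] at h1
    exact h1
  have hμYS : μY {z : Y × I | z.1 ∉ SY} = 0 := by
    have h1 : (μY.map Prod.fst) SYᶜ = 0 := metricSupport_compl_null _
    rw [Measure.map_apply measurable_fst hSYclosed.measurableSet.compl] at h1
    exact h1
  -- typical sets
  obtain ⟨T₀X, hT₀Xm, hT₀Xc, hT₀X⟩ := exists_typical (α := X × I) hX
  obtain ⟨T₀Y, hT₀Ym, hT₀Yc, hT₀Y⟩ := exists_typical (α := Y × I) hY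
  set EX : Set (ℕ → X × I) := {s | ∀ k, (s k).1 ∈ SX} with hEXdef
  set EY : Set (ℕ → Y × I) := {s | ∀ k, (s k).1 ∈ SY} with hEYdef
  have hEXm : MeasurableSet EX := by
    have : EX = ⋂ k, (fun s : ℕ → X × I => s k) ⁻¹' (Prod.fst ⁻¹' SX) := by
      ext s; simp [hEXdef]
    rw [this]
    exact MeasurableSet.iInter (fun k =>
      (measurable_pi_apply k) (measurable_fst hSXclosed.measurableSet))
  have hEYm : MeasurableSet EY := by
    have : EY = ⋂ k, (fun s : ℕ → Y × I => s k) ⁻¹' (Prod.fst ⁻¹' SY) := by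
      ext s; simp [hEYdef]
    rw [this]
    exact MeasurableSet.iInter (fun k =>
      (measurable_pi_apply k) (measurable_fst hSYclosed.measurableSet))
  have hEXc : μXinf EXᶜ = 0 := by
    have hrw : EXᶜ = ⋃ k, (fun s : ℕ → X × I => s k) ⁻¹' (Prod.fst ⁻¹' SX)ᶜ := by
      ext s; simp [hEXdef]
    rw [hrw]
    refine measure_iUnion_null (fun k => ?_)
    have hAm : MeasurableSet ((Prod.fst ⁻¹' SX)ᶜ : Set (X × I)) :=
      (measurable_fst hSXclosed.measurableSet).compl
    calc μXinf ((fun s : ℕ → X × I => s k) ⁻¹' (Prod.fst ⁻¹' SX)ᶜ)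
        = (μXinf.map (fun s => s k)) (Prod.fst ⁻¹' SX)ᶜ :=
          (Measure.map_apply (measurable_pi_apply k) hAm).symm
      _ = μX (Prod.fst ⁻¹' SX)ᶜ := by rw [prodMeas_map_eval hX k]
      _ = 0 := hμXS
  have hEYc : μYinf EYᶜ = 0 := by
    have hrw : EYᶜ = ⋃ k, (fun s : ℕ → Y × I => s k) ⁻¹' (Prod.fst ⁻¹' SY)ᶜ := by
      ext s; simp [hEYdef]
    rw [hrw]
    refine measure_iUnion_null (fun k => ?_)
    have hAm : MeasurableSet ((Prod.fst ⁻¹' SY)ᶜ : Set (Y × I)) :=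
      (measurable_fst hSYclosed.measurableSet).compl
    calc μYinf ((fun s : ℕ → Y × I => s k) ⁻¹' (Prod.fst ⁻¹' SY)ᶜ)
        = (μYinf.map (fun s => s k)) (Prod.fst ⁻¹' SY)ᶜ :=
          (Measure.map_apply (measurable_pi_apply k) hAm).symm
      _ = μY (Prod.fst ⁻¹' SY)ᶜ := by rw [prodMeas_map_eval hY k]
      _ = 0 := hμYS
  set TX : Set (ℕ → X × I) := T₀X ∩ EX with hTXdef
  set TY : Set (ℕ → Y × I) := T₀Y ∩ EY with hTYdef
  have hTXm : MeasurableSet TX := hT₀Xm.inter hEXm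
  have hTYm : MeasurableSet TY := hT₀Ym.inter hEYm
  have hTXc : μXinf TXᶜ = 0 := by
    rw [hTXdef, Set.compl_inter]
    exact measure_union_null hT₀Xc hEXc
  have hTYc : μYinf TYᶜ = 0 := by
    rw [hTYdef, Set.compl_inter]
    exact measure_union_null hT₀Yc hEYc
  -- find matching typical sequences with the same marked distance matrix
  obtain ⟨NX, hNXm, hNXc, hNX⟩ := exists_matching μXinf hmX hTXm hTXc
  obtain ⟨NY, hNYm, hNYc, hNY⟩ := exists_matching μYinf hmY hTYm hTYc
  have hNXc' : (mDMD (I := I) μXinf) NXᶜ = 0 := hNXc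
  have hNYc' : (mDMD (I := I) μXinf) NYᶜ = 0 := by rw [hνeq]; exact hNYc
  have hNN : ((NX ∩ NY)ᶜ : Set (MDM I)) ≠ Set.univ := by
    intro hcon
    have h1 : (mDMD (I := I) μXinf) (NX ∩ NY)ᶜ = 0 := by
      rw [Set.compl_inter]
      exact measure_union_null hNXc' hNYc'
    rw [hcon] at h1
    simp [measure_univ] at h1
  have hNNne : (NX ∩ NY).Nonempty := by
    rw [Set.nonempty_iff_ne_empty]
    intro hcon
    exact hNN (by rw [hcon, Set.compl_empty])
  obtain ⟨m, hmX', hmY'⟩ := hNNne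
  obtain ⟨s, hsT, hgs⟩ := hNX m hmX'
  obtain ⟨t, htT, hgt⟩ := hNY m hmY'
  have hR : distMatMap X I s = distMatMap Y I t := by rw [hgs, hgt]
  -- unpack coordinates
  set x : ℕ → X := fun k => (s k).1 with hxdef
  set y : ℕ → Y := fun k => (t k).1 with hydef
  have hmark : ∀ k, (s k).2 = (t k).2 := by
    intro k
    have := congrArg Prod.snd hR
    exact congrFun this k
  have hdist : ∀ k l, dist (x k) (x l) = dist (y k) (y l) := by
    have hnn : ∀ (p : PairIdx), nndist (x p.1.1) (x p.1.2) = nndist (y p.1.1) (y p.1.2) := by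
      intro p
      have := congrArg Prod.fst hR
      exact congrFun this p
    intro k l
    rcases lt_trichotomy k l with hkl | hkl | hkl
    · have h' : nndist (x k) (x l) = nndist (y k) (y l) := hnn ⟨(k, l), hkl⟩
      rw [dist_nndist, dist_nndist, h']
    · subst hkl; simp
    · have h' : nndist (x l) (x k) = nndist (y l) (y k) := hnn ⟨(l, k), hkl⟩
      rw [dist_comm (x k) (x l), dist_comm (y k) (y l), dist_nndist, dist_nndist, h']
  have hsTyp := hT₀X s hsT.1
  have htTyp := hT₀Y t htT.1
  have hxS : ∀ k, x k ∈ SX := fun k => hsT.2 k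
  have hyS : ∀ k, y k ∈ SY := fun k => htT.2 k
  -- the range of x is dense in the support of μX
  set D : Set X := closure (Set.range x) with hDdef
  have hDclosed : IsClosed D := isClosed_closure
  have hdenseD : SX ⊆ D := by
    intro ξ hξ
    rw [hDdef, Metric.mem_closure_iff]
    intro ε hε
    set G : Set (X × I) := Prod.fst ⁻¹' (Metric.ball ξ ε) with hGdef
    have hGopen : IsOpen G := (Metric.isOpen_ball).preimage continuous_fst
    have hGpos : μX G ≠ 0 := by
      have h1 : (μX.map Prod.fst) (Metric.ball ξ ε) = μX G :=
        Measure.map_apply measurable_fst Metric.isOpen_ball.measurableSet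
      have h2 : 0 < (μX.map Prod.fst) (Metric.ball ξ ε) := hξ ε hε
      rw [h1] at h2
      exact ne_of_gt h2
    obtain ⟨i, hi⟩ := typical_hits (μ := μX) hsTyp hGopen hGpos
    exact ⟨x i, Set.mem_range_self i, by
      have : dist (x i) ξ < ε := Metric.mem_ball.1 hi
      rwa [dist_comm] at this⟩
  -- construct the isometric embedding by extension
  have hextd : ∀ ξ : X, ξ ∈ D → ∃ (η : Y) (k : ℕ → ℕ),
      Tendsto (fun j => x (k j)) atTop (𝓝 ξ) ∧ Tendsto (fun j => y (k j)) atTop (𝓝 η) := by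
    intro ξ hξ
    obtain ⟨w, hw_mem, hw_lim⟩ := mem_closure_iff_seq_limit.1 hξ
    choose k hk using hw_mem
    have hxk : Tendsto (fun j => x (k j)) atTop (𝓝 ξ) := by
      have : (fun j => x (k j)) = w := funext hk
      rw [this]; exact hw_lim
    have hcauchy : CauchySeq (fun j => y (k j)) := by
      rw [Metric.cauchySeq_iff]
      have hc : CauchySeq (fun j => x (k j)) := hxk.cauchySeq
      rw [Metric.cauchySeq_iff] at hc
      intro ε hε
      obtain ⟨N, hN⟩ := hc ε hε
      exact ⟨N, fun a ha b hb => by rw [← hdist]; exact hN a ha b hb⟩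
    obtain ⟨η, hη⟩ := cauchySeq_tendsto_of_complete hcauchy
    exact ⟨η, k, hxk, hη⟩
  choose η kseq hk1 hk2 using hextd
  set φ : X → Y := fun ξ => if h : ξ ∈ D then η ξ h else y 0 with hφdef
  have hφiso : ∀ ξ (hξ : ξ ∈ D) ξ' (hξ' : ξ' ∈ D), dist (φ ξ) (φ ξ') = dist ξ ξ' := by
    intro ξ hξ ξ' hξ'
    simp only [hφdef, dif_pos hξ, dif_pos hξ']
    have h1 : Tendsto (fun j => dist (y (kseq ξ hξ j)) (y (kseq ξ' hξ' j))) atTop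
        (𝓝 (dist (η ξ hξ) (η ξ' hξ'))) := (hk2 ξ hξ).dist (hk2 ξ' hξ')
    have h2 : (fun j => dist (y (kseq ξ hξ j)) (y (kseq ξ' hξ' j)))
        = fun j => dist (x (kseq ξ hξ j)) (x (kseq ξ' hξ' j)) :=
      funext fun j => (hdist _ _).symm
    have h3 : Tendsto (fun j => dist (x (kseq ξ hξ j)) (x (kseq ξ' hξ' j))) atTop
        (𝓝 (dist ξ ξ')) := (hk1 ξ hξ).dist (hk1 ξ' hξ')
    rw [h2] at h1
    exact tendsto_nhds_unique h1 h3
  have hφx : ∀ i, φ (x i) = y i := by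
    intro i
    have hmem : x i ∈ D := subset_closure (Set.mem_range_self i)
    simp only [hφdef, dif_pos hmem]
    have h1 : Tendsto (fun j => dist (y (kseq _ hmem j)) (y i)) atTop
        (𝓝 (dist (η _ hmem) (y i))) := (hk2 _ hmem).dist tendsto_const_nhds
    have h2 : (fun j => dist (y (kseq _ hmem j)) (y i))
        = fun j => dist (x (kseq _ hmem j)) (x i) := funext fun j => (hdist _ _).symm
    have h3 : Tendsto (fun j => dist (x (kseq _ hmem j)) (x i)) atTop
        (𝓝 (dist (x i) (x i))) := (hk1 _ hmem).dist tendsto_const_nhds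
    rw [h2] at h1
    have h4 : dist (η _ hmem) (y i) = 0 := tendsto_nhds_unique h1 (by simpa using h3)
    exact dist_eq_zero.1 h4
  have hφD : ∀ ξ (hξ : ξ ∈ D), φ ξ ∈ SY := by
    intro ξ hξ
    have h1 : φ ξ ∈ closure (Set.range y) := by
      simp only [hφdef, dif_pos hξ]
      exact mem_closure_of_tendsto (hk2 ξ hξ)
        (Eventually.of_forall (fun j => Set.mem_range_self _))
    have h2 : closure (Set.range y) ⊆ SY :=
      hSYclosed.closure_subset_iff.2 (Set.range_subset_iff.2 hyS)
    exact h2 h1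
  -- global measurability of φ
  have hφcont : Continuous (D.restrict φ) := by
    have : Isometry (D.restrict φ) := by
      refine Isometry.of_dist_eq (fun a b => ?_)
      exact hφiso a a.2 b b.2
    exact this.continuous
  have hφm : Measurable φ := by
    intro B hB
    have hrw : φ ⁻¹' B = (Subtype.val '' (D.restrict φ ⁻¹' B))
        ∪ (if y 0 ∈ B then Dᶜ else (∅ : Set X)) := by
      ext ξ
      by_cases hξ : ξ ∈ D
      · simp only [Set.mem_union, Set.mem_preimage, Set.mem_image]
        constructor
        · intro hφξ
          exact Or.inl ⟨⟨ξ, hξ⟩, hφξ, rfl⟩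
        · rintro (⟨a, ha, rfl⟩ | hcon)
          · exact ha
          · exfalso
            by_cases hy0 : y 0 ∈ B
            · rw [if_pos hy0] at hcon; exact hcon hξ
            · rw [if_neg hy0] at hcon; exact hcon
      · have hφξ : φ ξ = y 0 := by simp only [hφdef, dif_neg hξ]
        simp only [Set.mem_union, Set.mem_preimage, Set.mem_image, hφξ]
        constructor
        · intro hy0
          rw [if_pos hy0]
          exact Or.inr hξ
        · rintro (⟨a, ha, rfl⟩ | hcon)
          · exact absurd a.2 hξ
          · by_cases hy0 : y 0 ∈ B
            · exact hy0
            · rw [if_neg hy0] at hcon; exact absurd hcon (Set.notMem_empty ξ)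
    rw [hrw]
    refine MeasurableSet.union ?_ ?_
    · exact (MeasurableEmbedding.subtype_coe hDclosed.measurableSet).measurableSet_image.2
        (hφcont.measurable hB)
    · split
      · exact hDclosed.measurableSet.compl
      · exact MeasurableSet.empty
  have hΦm : Measurable (Prod.map φ (id : I → I)) := hφm.prodMap measurable_id
  haveI : IsProbabilityMeasure (μX.map (Prod.map φ (id : I → I))) :=
    Measure.isProbabilityMeasure_map hΦm.aemeasurable
  -- assemble the equivalence
  refine ⟨φ, ?_, ?_, ?_, ?_⟩
  · intro ξ hξ
    exact hφD ξ (hdenseD hξ)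
  · have : Isometry (SX.restrict φ) := by
      refine Isometry.of_dist_eq (fun a b => ?_)
      exact hφiso a (hdenseD a.2) b (hdenseD b.2)
    exact this.continuous.measurable
  · intro a ha b hb
    exact (hφiso a (hdenseD ha) b (hdenseD hb)).symm
  -- the pushforward property
  apply ext_of_forall_lintegral_eq_of_IsFiniteMeasure
  intro f
  set g : (Y × I) →ᵇ ℝ := BCFtoReal f with hgdef
  have hgi1 : Integrable (fun z => ((f z : ℝ≥0) : ℝ)) (μX.map (Prod.map φ (id : I → I))) :=
    g.integrable _
  have hgi2 : Integrable (fun z => ((f z : ℝ≥0) : ℝ)) μY := g.integrable _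
  rw [lintegral_coe_eq_integral _ hgi1, lintegral_coe_eq_integral _ hgi2]
  suffices hreal : ∫ z, g z ∂(μX.map (Prod.map φ (id : I → I))) = ∫ z, g z ∂μY by
    have : (fun z => ((f z : ℝ≥0) : ℝ)) = fun z => g z := rfl
    rw [this, hreal]
  -- restrict to the closed set D ×ˢ univ and extend by Tietze
  set K : Set (X × I) := D ×ˢ (Set.univ : Set I) with hKdef
  have hKclosed : IsClosed K := hDclosed.prod isClosed_univ
  have hKres : Continuous (K.restrict (fun z => g (Prod.map φ (id : I → I) z))) := by
    have hc1 : Continuous (fun w : K => (⟨(w : X × I).1, w.2.1⟩ : D)) := by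
      refine Continuous.subtype_mk ?_ _
      exact continuous_fst.comp continuous_subtype_val
    have hc2 : Continuous (fun w : K => φ (w : X × I).1) := hφcont.comp hc1
    have hc3 : Continuous (fun w : K => ((w : X × I).2 : I)) :=
      continuous_snd.comp continuous_subtype_val
    exact g.continuous.comp (hc2.prodMk hc3)
  set gK : K →ᵇ ℝ := BoundedContinuousFunction.mk
    ⟨K.restrict (fun z => g (Prod.map φ (id : I → I) z)), hKres⟩
    (by
      obtain ⟨C, hC⟩ := g.map_bounded'
      exact ⟨C, fun a b => hC _ _⟩) with hgK
  obtain ⟨F, hFnorm, hFres⟩ :=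
    BoundedContinuousFunction.exists_norm_eq_restrict_eq_of_closed gK hKclosed
  have hFval : ∀ w : X × I, w ∈ K → F w = g (Prod.map φ (id : I → I) w) := by
    intro w hw
    have := congrFun (congrArg (fun (h : K →ᵇ ℝ) => (h : K → ℝ)) hFres) ⟨w, hw⟩
    exact this
  -- chain of equalities of integrals
  have h1 : ∫ z, g z ∂(μX.map (Prod.map φ (id : I → I)))
      = ∫ z, g (Prod.map φ (id : I → I) z) ∂μX :=
    integral_map hΦm.aemeasurable g.continuous.measurable.aestronglyMeasurable
  have hKnull : μX Kᶜ = 0 := by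
    refine measure_mono_null ?_ hμXS
    intro z hz
    simp only [hKdef, Set.mem_compl_iff, Set.mem_prod, Set.mem_univ, and_true] at hz
    exact fun hcon => hz (hdenseD hcon)
  have h2 : ∫ z, g (Prod.map φ (id : I → I) z) ∂μX = ∫ z, F z ∂μX := by
    refine integral_congr_ae ?_
    have : ∀ᵐ z ∂μX, z ∈ K := by
      rw [ae_iff]
      exact hKnull
    filter_upwards [this] with z hz
    exact (hFval z hz).symm
  have h3 := hsTyp F
  have h4 : ∀ i, F (s i) = g (t i) := by
    intro i
    have hsi : s i ∈ K := by
      simp only [hKdef, Set.mem_prod, Set.mem_univ, and_true]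
      exact subset_closure (Set.mem_range_self i)
    rw [hFval (s i) hsi]
    have : Prod.map φ (id : I → I) (s i) = t i := by
      have hfsteq : φ (s i).1 = (t i).1 := hφx i
      have hsndeq : (s i).2 = (t i).2 := hmark i
      exact Prod.ext hfsteq hsndeq
    rw [this]
  have h5 := htTyp g
  have h6 : ∫ z, F z ∂μX = ∫ z, g z ∂μY := by
    refine tendsto_nhds_unique ?_ h5
    have : (fun n => (∑ i ∈ Finset.range n, F (s i)) / (n : ℝ))
        = fun n => (∑ i ∈ Finset.range n, g (t i)) / (n : ℝ) := by
      funext n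
      congr 1
      exact Finset.sum_congr rfl (fun i _ => h4 i)
    rw [← this]
    exact h3
  rw [h1, h2, h6]


end
end

section
/- For I-marked metric measure spaces (X₁, r₁, μ₁) and (X₂, r₂, μ₂), the marked Gromov-Prohorov distance d_MGP((X₁,r₁,μ₁),(X₂,r₂,μ₂)) equals the infimum, over all metrics r on the disjoint union X₁ ⊔ X₂ extending the metrics r₁ on X₁ and r₂ on X₂, of the Prohorov distance between (φ̃₁)_*μ₁ and (φ̃₂)_*μ₂, where φ₁ : X₁ → X₁ ⊔ X₂ and φ₂ : X₂ → X₁ ⊔ X₂ are the canonical embeddings and φ̃ᵢ(x, u) = (φᵢ(x), u). -/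
open MeasureTheory Topology Filter NNReal BoundedContinuousFunction

noncomputable section

lemma prohorovDistSum_nonneg' {Z J : Type} [PseudoMetricSpace Z] [PseudoMetricSpace J]
    {m : MeasurableSpace (Z × J)} (μ ν : Measure (Z × J)) : 0 ≤ prohorovDistSum μ ν :=
  Real.sInf_nonneg fun _ hx => hx.1.le

section TwoIso

variable {X₁ X₂ W : Type} [MetricSpace X₁] [MetricSpace X₂] [MetricSpace W]
  {f : X₁ → W} {g : X₂ → W}

lemma completeSpace_of_two_isometries [CompleteSpace X₁] [CompleteSpace X₂]
    (hf : Isometry f) (hg : Isometry g)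
    (hcover : Set.range f ∪ Set.range g = Set.univ) : CompleteSpace W := by
  rw [completeSpace_iff_isComplete_univ, ← hcover]
  exact (hf.isUniformInducing.isComplete_range).union (hg.isUniformInducing.isComplete_range)

lemma separableSpace_of_two_isometries [TopologicalSpace.SeparableSpace X₁]
    [TopologicalSpace.SeparableSpace X₂]
    (hf : Isometry f) (hg : Isometry g)
    (hcover : Set.range f ∪ Set.range g = Set.univ) :
    TopologicalSpace.SeparableSpace W := by
  obtain ⟨s₁, hs₁c, hs₁d⟩ := TopologicalSpace.exists_countable_dense X₁
  obtain ⟨s₂, hs₂c, hs₂d⟩ := TopologicalSpace.exists_countable_dense X₂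
  refine ⟨⟨f '' s₁ ∪ g '' s₂, (hs₁c.image _).union (hs₂c.image _), ?_⟩⟩
  rw [Metric.dense_iff]
  intro w r hr
  have hw : w ∈ Set.range f ∪ Set.range g := by rw [hcover]; trivial
  rcases hw with ⟨x, rfl⟩ | ⟨x, rfl⟩
  · obtain ⟨y, hyb, hys⟩ := Metric.dense_iff.1 hs₁d x r hr
    refine ⟨f y, ?_, Or.inl ⟨y, hys, rfl⟩⟩
    rwa [Metric.mem_ball, hf.dist_eq]
  · obtain ⟨y, hyb, hys⟩ := Metric.dense_iff.1 hs₂d x r hr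
    refine ⟨g y, ?_, Or.inr ⟨y, hys, rfl⟩⟩
    rwa [Metric.mem_ball, hg.dist_eq]

lemma borelSpace_of_two_isometries [CompleteSpace X₁] [CompleteSpace X₂]
    [MeasurableSpace X₁] [BorelSpace X₁] [MeasurableSpace X₂] [BorelSpace X₂]
    [mW : MeasurableSpace W]
    (hf : Isometry f) (hg : Isometry g)
    (hcover : Set.range f ∪ Set.range g = Set.univ)
    (hcar : ∀ s : Set W, MeasurableSet s ↔ MeasurableSet (f ⁻¹' s) ∧ MeasurableSet (g ⁻¹' s)) :
    BorelSpace W := by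
  constructor
  apply le_antisymm
  · intro s hs
    rw [hcar] at hs
    letI mb : MeasurableSpace W := borel W
    haveI : BorelSpace W := ⟨rfl⟩
    show MeasurableSet[mb] s
    have e1 : MeasurableEmbedding f := (hf.isClosedEmbedding).measurableEmbedding
    have e2 : MeasurableEmbedding g := (hg.isClosedEmbedding).measurableEmbedding
    have hsu : s = f '' (f ⁻¹' s) ∪ g '' (g ⁻¹' s) := by
      apply Set.Subset.antisymm
      · intro w hws
        have hw : w ∈ Set.range f ∪ Set.range g := by rw [hcover]; trivial
        rcases hw with ⟨x, rfl⟩ | ⟨x, rfl⟩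
        · exact Or.inl ⟨x, hws, rfl⟩
        · exact Or.inr ⟨x, hws, rfl⟩
      · rintro w (⟨x, hx, rfl⟩ | ⟨x, hx, rfl⟩) <;> exact hx
    rw [hsu]
    exact (e1.measurableSet_image.2 hs.1).union (e2.measurableSet_image.2 hs.2)
  · rw [borel]
    apply MeasurableSpace.generateFrom_le
    intro t ht
    exact (hcar t).2
      ⟨((ht : IsOpen t).preimage hf.continuous).measurableSet,
       ((ht : IsOpen t).preimage hg.continuous).measurableSet⟩

end TwoIso

def glueMetricEps {X₁ X₂ Z : Type} [MetricSpace X₁] [MetricSpace X₂] [MetricSpace Z]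
    (φ₁ : X₁ → Z) (φ₂ : X₂ → Z) (hφ₁ : Isometry φ₁) (hφ₂ : Isometry φ₂)
    (ε : ℝ) (hε : 0 < ε) : MetricSpace (X₁ ⊕ X₂) where
  dist a b :=
    match a, b with
    | .inl x, .inl y => dist x y
    | .inr x, .inr y => dist x y
    | .inl x, .inr y => dist (φ₁ x) (φ₂ y) + ε
    | .inr x, .inl y => dist (φ₂ x) (φ₁ y) + ε
  dist_self a := by cases a <;> simp
  dist_comm a b := by cases a <;> cases b <;> simp [dist_comm]
  dist_triangle a b c := by
    rcases a with x | x <;> rcases b with y | y <;> rcases c with z | z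
    · exact dist_triangle x y z
    · show dist (φ₁ x) (φ₂ z) + ε ≤ dist x y + (dist (φ₁ y) (φ₂ z) + ε)
      have h := dist_triangle (φ₁ x) (φ₁ y) (φ₂ z)
      rw [hφ₁.dist_eq] at h; linarith
    · show dist x z ≤ (dist (φ₁ x) (φ₂ y) + ε) + (dist (φ₂ y) (φ₁ z) + ε)
      have h := dist_triangle (φ₁ x) (φ₂ y) (φ₁ z)
      have h2 : dist x z = dist (φ₁ x) (φ₁ z) := (hφ₁.dist_eq x z).symm
      linarith
    · show dist (φ₁ x) (φ₂ z) + ε ≤ (dist (φ₁ x) (φ₂ y) + ε) + dist y z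
      have h := dist_triangle (φ₁ x) (φ₂ y) (φ₂ z)
      rw [← hφ₂.dist_eq y z]; linarith
    · show dist (φ₂ x) (φ₁ z) + ε ≤ (dist (φ₂ x) (φ₁ y) + ε) + dist y z
      have h := dist_triangle (φ₂ x) (φ₁ y) (φ₁ z)
      rw [← hφ₁.dist_eq y z]; linarith
    · show dist x z ≤ (dist (φ₂ x) (φ₁ y) + ε) + (dist (φ₁ y) (φ₂ z) + ε)
      have h := dist_triangle (φ₂ x) (φ₁ y) (φ₂ z)
      have h2 : dist x z = dist (φ₂ x) (φ₂ z) := (hφ₂.dist_eq x z).symm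
      linarith
    · show dist (φ₂ x) (φ₁ z) + ε ≤ dist x y + (dist (φ₂ y) (φ₁ z) + ε)
      have h := dist_triangle (φ₂ x) (φ₂ y) (φ₁ z)
      rw [hφ₂.dist_eq] at h; linarith
    · exact dist_triangle x y z
  eq_of_dist_eq_zero := by
    intro a b h
    rcases a with x | x <;> rcases b with y | y
    · exact congrArg Sum.inl (dist_eq_zero.1 h)
    · exfalso
      have h' : dist (φ₁ x) (φ₂ y) + ε = 0 := h
      have := dist_nonneg (x := φ₁ x) (y := φ₂ y); linarith
    · exfalso
      have h' : dist (φ₂ x) (φ₁ y) + ε = 0 := h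
      have := dist_nonneg (x := φ₂ x) (y := φ₁ y); linarith
    · exact congrArg Sum.inr (dist_eq_zero.1 h)

lemma prohorovDistSum_map_le {W Z J : Type} [MetricSpace W] [MetricSpace Z] [MetricSpace J]
    [MeasurableSpace W] [BorelSpace W] [SecondCountableTopology W]
    [MeasurableSpace Z] [BorelSpace Z] [SecondCountableTopology Z]
    [MeasurableSpace J] [BorelSpace J] [SecondCountableTopology J]
    (ψ : W → Z) (hψc : Continuous ψ)
    {ε : ℝ} (hε : 0 < ε)
    (hhi : ∀ a b : W, dist a b ≤ dist (ψ a) (ψ b) + ε)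
    (μ ν : Measure (W × J)) [IsProbabilityMeasure μ] [IsProbabilityMeasure ν]
    {δ : ℝ} (hδ : 0 < δ) :
    prohorovDistSum μ ν ≤
      prohorovDistSum (μ.map (Prod.map ψ id)) (ν.map (Prod.map ψ id)) + (ε + δ) := by
  have hΨ : Measurable (Prod.map ψ (id : J → J)) := hψc.measurable.prodMap measurable_id
  set Ψ := Prod.map ψ (id : J → J) with hΨdef
  haveI : IsProbabilityMeasure (μ.map Ψ) := Measure.isProbabilityMeasure_map hΨ.aemeasurable
  haveI : IsProbabilityMeasure (ν.map Ψ) := Measure.isProbabilityMeasure_map hΨ.aemeasurable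
  set SW := {ε' : ℝ | 0 < ε' ∧ ∀ A : Set (W × J), MeasurableSet A →
    μ A ≤ ν {q | ∃ p ∈ A, pairDist p q < ε'} + ENNReal.ofReal ε' ∧
    ν A ≤ μ {q | ∃ p ∈ A, pairDist p q < ε'} + ENNReal.ofReal ε'} with hSW
  set SZ := {ε' : ℝ | 0 < ε' ∧ ∀ A : Set (Z × J), MeasurableSet A →
    μ.map Ψ A ≤ ν.map Ψ {q | ∃ p ∈ A, pairDist p q < ε'} + ENNReal.ofReal ε' ∧
    ν.map Ψ A ≤ μ.map Ψ {q | ∃ p ∈ A, pairDist p q < ε'} + ENNReal.ofReal ε'} with hSZ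
  have hSZne : SZ.Nonempty := by
    refine ⟨2, two_pos, fun A _ => ⟨?_, ?_⟩⟩ <;>
      exact le_add_left ((prob_le_one).trans (ENNReal.one_le_ofReal.2 one_le_two))
  have est : ∀ (α β : Measure (W × J)), ∀ ε' > (0:ℝ),
      (∀ B : Set (Z × J), MeasurableSet B →
        α.map Ψ B ≤ β.map Ψ {q | ∃ p ∈ B, pairDist p q < ε'} + ENNReal.ofReal ε') →
      ∀ A : Set (W × J), MeasurableSet A →
        α A ≤ β {q | ∃ p ∈ A, pairDist p q < ε' + (ε + δ)} + ENNReal.ofReal (ε' + (ε + δ)) := by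
    intro α β ε' hε' hαβ A hA
    set B := closure (Ψ '' A) with hB
    have hBm : MeasurableSet B := isClosed_closure.measurableSet
    have hBem : MeasurableSet {q : Z × J | ∃ p ∈ B, pairDist p q < ε'} := by
      have ho : IsOpen {q : Z × J | ∃ p ∈ B, pairDist p q < ε'} := by
        have : {q : Z × J | ∃ p ∈ B, pairDist p q < ε'} =
            ⋃ p ∈ B, {q : Z × J | pairDist p q < ε'} := by
          ext q; simp [Set.mem_iUnion]
        rw [this]
        refine isOpen_biUnion fun p _ => ?_
        have hc : Continuous fun q : Z × J => dist p.1 q.1 + dist p.2 q.2 :=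
          (continuous_const.dist continuous_fst).add (continuous_const.dist continuous_snd)
        exact isOpen_lt hc continuous_const
      exact ho.measurableSet
    have step1 : α A ≤ α.map Ψ B := by
      rw [Measure.map_apply hΨ hBm]
      exact measure_mono ((Set.subset_preimage_image Ψ A).trans
        (Set.preimage_mono subset_closure))
    have step3 : β.map Ψ {q : Z × J | ∃ p ∈ B, pairDist p q < ε'} ≤
        β {q : W × J | ∃ p ∈ A, pairDist p q < ε' + (ε + δ)} := by
      rw [Measure.map_apply hΨ hBem]
      apply measure_mono
      rintro w ⟨p, hpB, hpd⟩
      obtain ⟨q, hqS, hqd⟩ := Metric.mem_closure_iff.1 hpB (δ/2) (by linarith)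
      obtain ⟨a, haA, rfl⟩ := hqS
      refine ⟨a, haA, ?_⟩
      have h1 : dist p.1 (ψ a.1) ≤ dist p (Ψ a) := by
        rw [Prod.dist_eq]; exact le_max_left _ _
      have h2 : dist p.2 a.2 ≤ dist p (Ψ a) := by
        rw [Prod.dist_eq]; exact le_max_right _ _
      have hd1 : dist a.1 w.1 ≤ dist (ψ a.1) (ψ w.1) + ε := hhi a.1 w.1
      have ht : dist (ψ a.1) (ψ w.1) ≤ dist (ψ a.1) p.1 + dist p.1 (ψ w.1) :=
        dist_triangle _ _ _
      have ht2 : dist a.2 w.2 ≤ dist a.2 p.2 + dist p.2 w.2 := dist_triangle _ _ _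
      have hpd' : dist p.1 (ψ w.1) + dist p.2 w.2 < ε' := hpd
      show dist a.1 w.1 + dist a.2 w.2 < ε' + (ε + δ)
      have hsym1 : dist (ψ a.1) p.1 = dist p.1 (ψ a.1) := dist_comm _ _
      have hsym2 : dist a.2 p.2 = dist p.2 a.2 := dist_comm _ _
      linarith
    calc α A ≤ α.map Ψ B := step1
      _ ≤ β.map Ψ {q : Z × J | ∃ p ∈ B, pairDist p q < ε'} + ENNReal.ofReal ε' := hαβ B hBm
      _ ≤ β {q : W × J | ∃ p ∈ A, pairDist p q < ε' + (ε + δ)}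
            + ENNReal.ofReal (ε' + (ε + δ)) :=
        add_le_add step3 (ENNReal.ofReal_le_ofReal (by linarith))
  have key : ∀ ε' ∈ SZ, ε' + (ε + δ) ∈ SW := by
    rintro ε' ⟨hε'pos, hε'⟩
    refine ⟨by linarith, fun A hA => ?_⟩
    exact ⟨est μ ν ε' hε'pos (fun B hB => (hε' B hB).1) A hA,
           est ν μ ε' hε'pos (fun B hB => (hε' B hB).2) A hA⟩
  have hbdd : BddBelow SW := ⟨0, fun x hx => hx.1.le⟩
  have h1 : prohorovDistSum μ ν - (ε + δ) ≤ sInf SZ := by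
    apply le_csInf hSZne
    intro ε' hε'
    have hh := csInf_le hbdd (key ε' hε')
    have heq : prohorovDistSum μ ν = sInf SW := rfl
    linarith [heq ▸ hh]
  have heqZ : prohorovDistSum (μ.map Ψ) (ν.map Ψ) = sInf SZ := rfl
  rw [heqZ]
  linarith


/-- Remark 3.2: the marked Gromov-Prohorov distance equals the infimum
over all metrics on the disjoint union `X₁ ⊔ X₂` extending the given metrics of the
Prohorov distance of the pushforwards under the canonical embeddings. -/
theorem mGPDist_eq_inf_disjoint_union
    {I : Type} [MetricSpace I] [CompleteSpace I] [TopologicalSpace.SeparableSpace I]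
    [MeasurableSpace I] [BorelSpace I]
    {X₁ : Type} [MetricSpace X₁] [CompleteSpace X₁] [TopologicalSpace.SeparableSpace X₁]
    [MeasurableSpace X₁] [BorelSpace X₁]
    {X₂ : Type} [MetricSpace X₂] [CompleteSpace X₂] [TopologicalSpace.SeparableSpace X₂]
    [MeasurableSpace X₂] [BorelSpace X₂]
    (μ₁ : Measure (X₁ × I)) [IsProbabilityMeasure μ₁]
    (μ₂ : Measure (X₂ × I)) [IsProbabilityMeasure μ₂] :
    mGPDist μ₁ μ₂ =
      sInf {d : ℝ | ∃ _ : MetricSpace (X₁ ⊕ X₂),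
        (∀ x y : X₁, dist (Sum.inl x : X₁ ⊕ X₂) (Sum.inl y : X₁ ⊕ X₂) = dist x y) ∧
        (∀ x y : X₂, dist (Sum.inr x : X₁ ⊕ X₂) (Sum.inr y : X₁ ⊕ X₂) = dist x y) ∧
        d = prohorovDistSum (μ₁.map (Prod.map (Sum.inl : X₁ → X₁ ⊕ X₂) (id : I → I)))
              (μ₂.map (Prod.map (Sum.inr : X₂ → X₁ ⊕ X₂) (id : I → I)))} := by
  classical
  have hcover : Set.range (Sum.inl : X₁ → X₁ ⊕ X₂) ∪ Set.range Sum.inr = Set.univ := by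
    ext (x | x) <;> simp
  have hcar : ∀ s : Set (X₁ ⊕ X₂),
      MeasurableSet s ↔ MeasurableSet (Sum.inl ⁻¹' s) ∧ MeasurableSet (Sum.inr ⁻¹' s) :=
    fun _ => measurableSet_sum_iff
  -- bounded below
  have hbddL : BddBelow {d : ℝ | ∃ (Z : Type) (_ : MetricSpace Z) (_ : MeasurableSpace Z),
      BorelSpace Z ∧ TopologicalSpace.SeparableSpace Z ∧ CompleteSpace Z ∧
      ∃ (φ₁ : X₁ → Z) (φ₂ : X₂ → Z), Isometry φ₁ ∧ Isometry φ₂ ∧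
        d = prohorovDistSum (μ₁.map (Prod.map φ₁ id)) (μ₂.map (Prod.map φ₂ id))} := by
    refine ⟨0, ?_⟩
    rintro d ⟨Z, _, _, _, _, _, φ₁, φ₂, _, _, rfl⟩
    exact prohorovDistSum_nonneg' _ _
  have hbddR : BddBelow {d : ℝ | ∃ _ : MetricSpace (X₁ ⊕ X₂),
      (∀ x y : X₁, dist (Sum.inl x : X₁ ⊕ X₂) (Sum.inl y : X₁ ⊕ X₂) = dist x y) ∧
      (∀ x y : X₂, dist (Sum.inr x : X₁ ⊕ X₂) (Sum.inr y : X₁ ⊕ X₂) = dist x y) ∧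
      d = prohorovDistSum (μ₁.map (Prod.map (Sum.inl : X₁ → X₁ ⊕ X₂) (id : I → I)))
            (μ₂.map (Prod.map (Sum.inr : X₂ → X₁ ⊕ X₂) (id : I → I)))} := by
    refine ⟨0, ?_⟩
    rintro d ⟨m, -, -, rfl⟩
    exact prohorovDistSum_nonneg' _ _
  have hRne : Set.Nonempty {d : ℝ | ∃ _ : MetricSpace (X₁ ⊕ X₂),
      (∀ x y : X₁, dist (Sum.inl x : X₁ ⊕ X₂) (Sum.inl y : X₁ ⊕ X₂) = dist x y) ∧
      (∀ x y : X₂, dist (Sum.inr x : X₁ ⊕ X₂) (Sum.inr y : X₁ ⊕ X₂) = dist x y) ∧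
      d = prohorovDistSum (μ₁.map (Prod.map (Sum.inl : X₁ → X₁ ⊕ X₂) (id : I → I)))
            (μ₂.map (Prod.map (Sum.inr : X₂ → X₁ ⊕ X₂) (id : I → I)))} := by
    exact ⟨_, Metric.metricSpaceSum, fun _ _ => rfl, fun _ _ => rfl, rfl⟩
  -- the RHS set is a subset of the (defining) set of `mGPDist`
  have hsub : {d : ℝ | ∃ _ : MetricSpace (X₁ ⊕ X₂),
      (∀ x y : X₁, dist (Sum.inl x : X₁ ⊕ X₂) (Sum.inl y : X₁ ⊕ X₂) = dist x y) ∧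
      (∀ x y : X₂, dist (Sum.inr x : X₁ ⊕ X₂) (Sum.inr y : X₁ ⊕ X₂) = dist x y) ∧
      d = prohorovDistSum (μ₁.map (Prod.map (Sum.inl : X₁ → X₁ ⊕ X₂) (id : I → I)))
            (μ₂.map (Prod.map (Sum.inr : X₂ → X₁ ⊕ X₂) (id : I → I)))} ⊆
      {d : ℝ | ∃ (Z : Type) (_ : MetricSpace Z) (_ : MeasurableSpace Z),
      BorelSpace Z ∧ TopologicalSpace.SeparableSpace Z ∧ CompleteSpace Z ∧
      ∃ (φ₁ : X₁ → Z) (φ₂ : X₂ → Z), Isometry φ₁ ∧ Isometry φ₂ ∧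
        d = prohorovDistSum (μ₁.map (Prod.map φ₁ id)) (μ₂.map (Prod.map φ₂ id))} := by
    rintro d ⟨m, h₁, h₂, rfl⟩
    letI := m
    have hi1 : Isometry (Sum.inl : X₁ → X₁ ⊕ X₂) := Isometry.of_dist_eq h₁
    have hi2 : Isometry (Sum.inr : X₂ → X₁ ⊕ X₂) := Isometry.of_dist_eq h₂
    exact ⟨X₁ ⊕ X₂, m, inferInstance,
      borelSpace_of_two_isometries hi1 hi2 hcover hcar,
      separableSpace_of_two_isometries hi1 hi2 hcover,
      completeSpace_of_two_isometries hi1 hi2 hcover,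
      Sum.inl, Sum.inr, hi1, hi2, rfl⟩
  apply le_antisymm
  · unfold mGPDist
    exact csInf_le_csInf hbddL hRne hsub
  · apply le_csInf
    · obtain ⟨d, hd⟩ := hRne
      exact ⟨d, hsub hd⟩
    · rintro d ⟨Z, mZ, mMZ, hBZ, hSZ, hCZ, φ₁, φ₂, hφ₁, hφ₂, rfl⟩
      refine le_of_forall_sub_le fun ε hε => ?_
      rw [sub_le_iff_le_add]
      -- glue metric with parameter ε/2
      letI mW : MetricSpace (X₁ ⊕ X₂) := glueMetricEps φ₁ φ₂ hφ₁ hφ₂ (ε/2) (by linarith)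
      have h₁ : ∀ x y : X₁, dist (Sum.inl x : X₁ ⊕ X₂) (Sum.inl y) = dist x y :=
        fun _ _ => rfl
      have h₂ : ∀ x y : X₂, dist (Sum.inr x : X₁ ⊕ X₂) (Sum.inr y) = dist x y :=
        fun _ _ => rfl
      have hi1 : Isometry (Sum.inl : X₁ → X₁ ⊕ X₂) := Isometry.of_dist_eq h₁
      have hi2 : Isometry (Sum.inr : X₂ → X₁ ⊕ X₂) := Isometry.of_dist_eq h₂
      haveI hBW := borelSpace_of_two_isometries hi1 hi2 hcover hcar
      haveI hSepW := separableSpace_of_two_isometries hi1 hi2 hcover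
      haveI hSCW := @UniformSpace.secondCountable_of_separable (X₁ ⊕ X₂)
        mW.toPseudoMetricSpace.toUniformSpace inferInstance hSepW
      haveI : SecondCountableTopology Z := UniformSpace.secondCountable_of_separable _
      haveI : SecondCountableTopology I := UniformSpace.secondCountable_of_separable _
      have hminl : Measurable (Prod.map (Sum.inl : X₁ → X₁ ⊕ X₂) (id : I → I)) :=
        measurable_inl.prodMap measurable_id
      have hminr : Measurable (Prod.map (Sum.inr : X₂ → X₁ ⊕ X₂) (id : I → I)) :=
        measurable_inr.prodMap measurable_id
      haveI : IsProbabilityMeasure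
          (μ₁.map (Prod.map (Sum.inl : X₁ → X₁ ⊕ X₂) (id : I → I))) :=
        Measure.isProbabilityMeasure_map hminl.aemeasurable
      haveI : IsProbabilityMeasure
          (μ₂.map (Prod.map (Sum.inr : X₂ → X₁ ⊕ X₂) (id : I → I))) :=
        Measure.isProbabilityMeasure_map hminr.aemeasurable
      set ψ : X₁ ⊕ X₂ → Z := Sum.elim φ₁ φ₂ with hψdef
      have hψlip : LipschitzWith 1 ψ := by
        apply LipschitzWith.of_dist_le_mul
        rintro (a | a) (b | b)
        · show dist (φ₁ a) (φ₁ b) ≤ 1 * dist a b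
          rw [hφ₁.dist_eq, one_mul]
        · show dist (φ₁ a) (φ₂ b) ≤ 1 * (dist (φ₁ a) (φ₂ b) + ε/2)
          rw [one_mul]; linarith
        · show dist (φ₂ a) (φ₁ b) ≤ 1 * (dist (φ₂ a) (φ₁ b) + ε/2)
          rw [one_mul]; linarith
        · show dist (φ₂ a) (φ₂ b) ≤ 1 * dist a b
          rw [hφ₂.dist_eq, one_mul]
      have hψc := hψlip.continuous
      have hhi : ∀ a b : X₁ ⊕ X₂, dist a b ≤ dist (ψ a) (ψ b) + ε/2 := by
        rintro (a | a) (b | b)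
        · show dist a b ≤ dist (φ₁ a) (φ₁ b) + ε/2
          rw [hφ₁.dist_eq]; linarith
        · exact le_refl _
        · exact le_refl _
        · show dist a b ≤ dist (φ₂ a) (φ₂ b) + ε/2
          rw [hφ₂.dist_eq]; linarith
      have hcomp := prohorovDistSum_map_le ψ hψc (by linarith : (0:ℝ) < ε/2) hhi
        (μ₁.map (Prod.map (Sum.inl : X₁ → X₁ ⊕ X₂) (id : I → I)))
        (μ₂.map (Prod.map (Sum.inr : X₂ → X₁ ⊕ X₂) (id : I → I)))
        (δ := ε/2) (by linarith)
      have hΨmeas : Measurable (Prod.map ψ (id : I → I)) :=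
        ((hφ₁.continuous.measurable).sumElim (hφ₂.continuous.measurable)).prodMap
          measurable_id
      have hm1 : (μ₁.map (Prod.map (Sum.inl : X₁ → X₁ ⊕ X₂) (id : I → I))).map
          (Prod.map ψ id) = μ₁.map (Prod.map φ₁ id) := by
        rw [Measure.map_map hΨmeas hminl]
        rfl
      have hm2 : (μ₂.map (Prod.map (Sum.inr : X₂ → X₁ ⊕ X₂) (id : I → I))).map
          (Prod.map ψ id) = μ₂.map (Prod.map φ₂ id) := by
        rw [Measure.map_map hΨmeas hminr]
        rfl
      rw [hm1, hm2] at hcomp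
      have hmem : prohorovDistSum
          (μ₁.map (Prod.map (Sum.inl : X₁ → X₁ ⊕ X₂) (id : I → I)))
          (μ₂.map (Prod.map (Sum.inr : X₂ → X₁ ⊕ X₂) (id : I → I))) ∈
          {d : ℝ | ∃ _ : MetricSpace (X₁ ⊕ X₂),
            (∀ x y : X₁, dist (Sum.inl x : X₁ ⊕ X₂) (Sum.inl y : X₁ ⊕ X₂) = dist x y) ∧
            (∀ x y : X₂, dist (Sum.inr x : X₁ ⊕ X₂) (Sum.inr y : X₁ ⊕ X₂) = dist x y) ∧
            d = prohorovDistSum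
              (μ₁.map (Prod.map (Sum.inl : X₁ → X₁ ⊕ X₂) (id : I → I)))
              (μ₂.map (Prod.map (Sum.inr : X₂ → X₁ ⊕ X₂) (id : I → I)))} :=
        ⟨mW, h₁, h₂, rfl⟩
      have hle := csInf_le hbddR hmem
      have : (ε/2 + ε/2) = ε := by ring
      rw [this] at hcomp
      linarith

end
end

section
/- The marked Gromov-Prohorov distance satisfies the triangle inequality: for any three I-marked metric measure spaces (X₁, r₁, μ₁), (X₂, r₂, μ₂), (X₃, r₃, μ₃), one has d_MGP((X₁,r₁,μ₁),(X₃,r₃,μ₃)) ≤ d_MGP((X₁,r₁,μ₁),(X₂,r₂,μ₂)) + d_MGP((X₂,r₂,μ₂),(X₃,r₃,μ₃)). -/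
open MeasureTheory Topology Filter NNReal BoundedContinuousFunction

noncomputable section

section AuxPD

variable {Z I : Type} [PseudoMetricSpace Z] [PseudoMetricSpace I]

/-- admissible set for the Prohorov distance -/
def padm {m : MeasurableSpace (Z × I)} (μ ν : Measure (Z × I)) : Set ℝ :=
  {ε : ℝ | 0 < ε ∧ ∀ A : Set (Z × I), MeasurableSet A →
    μ A ≤ ν {q | ∃ p ∈ A, pairDist p q < ε} + ENNReal.ofReal ε ∧
    ν A ≤ μ {q | ∃ p ∈ A, pairDist p q < ε} + ENNReal.ofReal ε}

lemma prohorovDistSum_eq_sInf_padm {m : MeasurableSpace (Z × I)} (μ ν : Measure (Z × I)) :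
    prohorovDistSum μ ν = sInf (padm μ ν) := rfl

lemma isOpen_enl (ε : ℝ) (A : Set (Z × I)) :
    IsOpen {q : Z × I | ∃ p ∈ A, pairDist p q < ε} := by
  have : {q : Z × I | ∃ p ∈ A, pairDist p q < ε} = ⋃ p ∈ A, {q | pairDist p q < ε} := by
    ext q; simp [Set.mem_iUnion]
  rw [this]
  refine isOpen_biUnion fun p _ => ?_
  have hc : Continuous fun q : Z × I => pairDist p q := by
    unfold pairDist
    exact (continuous_const.dist (continuous_fst)).add (continuous_const.dist (continuous_snd))
  exact isOpen_lt hc continuous_const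

lemma one_mem_padm {m : MeasurableSpace (Z × I)} (μ ν : Measure (Z × I))
    [IsProbabilityMeasure μ] [IsProbabilityMeasure ν] : (1 : ℝ) ∈ padm μ ν := by
  refine ⟨one_pos, fun A _ => ⟨?_, ?_⟩⟩ <;>
    exact prob_le_one.trans (by rw [ENNReal.ofReal_one]; exact le_add_self)

lemma enl_subset_enl_add {ε₁ ε₂ : ℝ} (A : Set (Z × I)) :
    {q : Z × I | ∃ p ∈ {q : Z × I | ∃ p ∈ A, pairDist p q < ε₁}, pairDist p q < ε₂} ⊆
      {q : Z × I | ∃ p ∈ A, pairDist p q < ε₁ + ε₂} := by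
  rintro q ⟨p, ⟨p', hp'A, h1⟩, h2⟩
  refine ⟨p', hp'A, ?_⟩
  have htri : pairDist p' q ≤ pairDist p' p + pairDist p q := by
    unfold pairDist
    have := dist_triangle p'.1 p.1 q.1
    have := dist_triangle p'.2 p.2 q.2
    linarith
  linarith

lemma padm_add {m : MeasurableSpace (Z × I)} [OpensMeasurableSpace (Z × I)]
    {ν₁ ν₂ ν₃ : Measure (Z × I)} {ε₁ ε₂ : ℝ}
    (h₁ : ε₁ ∈ padm ν₁ ν₂) (h₂ : ε₂ ∈ padm ν₂ ν₃) : ε₁ + ε₂ ∈ padm ν₁ ν₃ := by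
  obtain ⟨hε₁, H₁⟩ := h₁
  obtain ⟨hε₂, H₂⟩ := h₂
  refine ⟨by linarith, fun A hA => ⟨?_, ?_⟩⟩
  · calc ν₁ A ≤ ν₂ {q | ∃ p ∈ A, pairDist p q < ε₁} + ENNReal.ofReal ε₁ := (H₁ A hA).1
    _ ≤ (ν₃ {q | ∃ p ∈ {q : Z × I | ∃ p ∈ A, pairDist p q < ε₁}, pairDist p q < ε₂}
          + ENNReal.ofReal ε₂) + ENNReal.ofReal ε₁ := by
        exact add_le_add (H₂ _ ((isOpen_enl ε₁ A).measurableSet)).1 le_rfl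
    _ ≤ ν₃ {q | ∃ p ∈ A, pairDist p q < ε₁ + ε₂} + ENNReal.ofReal (ε₁ + ε₂) := by
        rw [ENNReal.ofReal_add hε₁.le hε₂.le]
        calc _ ≤ ν₃ {q | ∃ p ∈ A, pairDist p q < ε₁ + ε₂} + ENNReal.ofReal ε₂
              + ENNReal.ofReal ε₁ := by
                exact add_le_add (add_le_add
                  (measure_mono (enl_subset_enl_add (ε₁ := ε₁) (ε₂ := ε₂) A)) le_rfl) le_rfl
        _ = _ := by ring
  · calc ν₃ A ≤ ν₂ {q | ∃ p ∈ A, pairDist p q < ε₂} + ENNReal.ofReal ε₂ := (H₂ A hA).2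
    _ ≤ (ν₁ {q | ∃ p ∈ {q : Z × I | ∃ p ∈ A, pairDist p q < ε₂}, pairDist p q < ε₁}
          + ENNReal.ofReal ε₁) + ENNReal.ofReal ε₂ := by
        exact add_le_add (H₁ _ ((isOpen_enl ε₂ A).measurableSet)).2 le_rfl
    _ ≤ ν₁ {q | ∃ p ∈ A, pairDist p q < ε₁ + ε₂} + ENNReal.ofReal (ε₁ + ε₂) := by
        rw [ENNReal.ofReal_add hε₁.le hε₂.le]
        have hsub := enl_subset_enl_add (ε₁ := ε₂) (ε₂ := ε₁) (I := I) A
        rw [add_comm ε₂ ε₁] at hsub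
        calc _ ≤ ν₁ {q | ∃ p ∈ A, pairDist p q < ε₁ + ε₂} + ENNReal.ofReal ε₁
              + ENNReal.ofReal ε₂ := add_le_add (add_le_add
                  (measure_mono hsub) le_rfl) le_rfl
        _ = _ := by ring

end AuxPD
section AuxPD2

variable {Z I G : Type} [PseudoMetricSpace Z] [PseudoMetricSpace I] [PseudoMetricSpace G]

lemma pairDist_map {ι : Z → G} (hι : Isometry ι) (p q : Z × I) :
    pairDist (Prod.map ι (id : I → I) p) (Prod.map ι id q) = pairDist p q := by
  simp [pairDist, Prod.map, hι.dist_eq]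

lemma padm_map {mZ : MeasurableSpace (Z × I)} {mG : MeasurableSpace (G × I)}
    [OpensMeasurableSpace (Z × I)] [OpensMeasurableSpace (G × I)]
    {ι : Z → G} (hι : Isometry ι) (hm : Measurable (Prod.map ι (id : I → I)))
    {ν₁ ν₂ : Measure (Z × I)} {ε : ℝ} (hε : ε ∈ padm ν₁ ν₂) :
    ε ∈ padm (ν₁.map (Prod.map ι id)) (ν₂.map (Prod.map ι id)) := by
  obtain ⟨hpos, H⟩ := hε
  refine ⟨hpos, fun A hA => ?_⟩
  have hpre : ∀ ν : Measure (Z × I), ν.map (Prod.map ι id) A = ν (Prod.map ι id ⁻¹' A) :=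
    fun ν => Measure.map_apply hm hA
  have hpreE : ∀ ν : Measure (Z × I),
      ν.map (Prod.map ι id) {q | ∃ p ∈ A, pairDist p q < ε}
        = ν (Prod.map ι id ⁻¹' {q | ∃ p ∈ A, pairDist p q < ε}) :=
    fun ν => Measure.map_apply hm (isOpen_enl ε A).measurableSet
  have hsub : {q : Z × I | ∃ p ∈ Prod.map ι (id : I → I) ⁻¹' A, pairDist p q < ε} ⊆
      Prod.map ι id ⁻¹' {q | ∃ p ∈ A, pairDist p q < ε} := by
    rintro q ⟨p, hp, hd⟩
    exact ⟨Prod.map ι id p, hp, by rwa [pairDist_map hι]⟩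
  have hAm : MeasurableSet (Prod.map ι (id : I → I) ⁻¹' A) := hm hA
  constructor
  · rw [hpre ν₁, hpreE ν₂]
    calc ν₁ (Prod.map ι id ⁻¹' A)
        ≤ ν₂ {q | ∃ p ∈ Prod.map ι (id : I → I) ⁻¹' A, pairDist p q < ε}
          + ENNReal.ofReal ε := (H _ hAm).1
      _ ≤ _ := add_le_add (measure_mono hsub) le_rfl
  · rw [hpre ν₂, hpreE ν₁]
    calc ν₂ (Prod.map ι id ⁻¹' A)
        ≤ ν₁ {q | ∃ p ∈ Prod.map ι (id : I → I) ⁻¹' A, pairDist p q < ε}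
          + ENNReal.ofReal ε := (H _ hAm).2
      _ ≤ _ := add_le_add (measure_mono hsub) le_rfl

lemma bddBelow_padm {m : MeasurableSpace (Z × I)} (μ ν : Measure (Z × I)) :
    BddBelow (padm μ ν) := ⟨0, fun _ h => h.1.le⟩

lemma prohorovDistSum_map_le_s5 {mZ : MeasurableSpace (Z × I)} {mG : MeasurableSpace (G × I)}
    [OpensMeasurableSpace (Z × I)] [OpensMeasurableSpace (G × I)]
    {ι : Z → G} (hι : Isometry ι) (hm : Measurable (Prod.map ι (id : I → I)))
    (ν₁ ν₂ : Measure (Z × I)) [IsProbabilityMeasure ν₁] [IsProbabilityMeasure ν₂] :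
    prohorovDistSum (ν₁.map (Prod.map ι id)) (ν₂.map (Prod.map ι id))
      ≤ prohorovDistSum ν₁ ν₂ := by
  rw [prohorovDistSum_eq_sInf_padm, prohorovDistSum_eq_sInf_padm]
  exact csInf_le_csInf (bddBelow_padm _ _) ⟨1, one_mem_padm ν₁ ν₂⟩
    (fun ε hε => padm_map hι hm hε)

lemma prohorovDistSum_triangle {m : MeasurableSpace (Z × I)} [OpensMeasurableSpace (Z × I)]
    (ν₁ ν₂ ν₃ : Measure (Z × I)) [IsProbabilityMeasure ν₁] [IsProbabilityMeasure ν₂]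
    [IsProbabilityMeasure ν₃] :
    prohorovDistSum ν₁ ν₃ ≤ prohorovDistSum ν₁ ν₂ + prohorovDistSum ν₂ ν₃ := by
  simp only [prohorovDistSum_eq_sInf_padm]
  have key : ∀ ε₁ ∈ padm ν₁ ν₂, ∀ ε₂ ∈ padm ν₂ ν₃, sInf (padm ν₁ ν₃) ≤ ε₁ + ε₂ :=
    fun ε₁ h₁ ε₂ h₂ => csInf_le (bddBelow_padm _ _) (padm_add h₁ h₂)
  have h2 : ∀ ε₁ ∈ padm ν₁ ν₂, sInf (padm ν₁ ν₃) - ε₁ ≤ sInf (padm ν₂ ν₃) :=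
    fun ε₁ h₁ => le_csInf ⟨1, one_mem_padm ν₂ ν₃⟩
      (fun ε₂ h₂ => by linarith [key ε₁ h₁ ε₂ h₂])
  have h3 : sInf (padm ν₁ ν₃) - sInf (padm ν₂ ν₃) ≤ sInf (padm ν₁ ν₂) :=
    le_csInf ⟨1, one_mem_padm ν₁ ν₂⟩ (fun ε₁ h₁ => by linarith [h2 ε₁ h₁])
  linarith

end AuxPD2

section AuxSep

private lemma separableSpace_of_pair {A B S : Type} [TopologicalSpace A] [TopologicalSpace B]
    [TopologicalSpace S] [TopologicalSpace.SeparableSpace A] [TopologicalSpace.SeparableSpace B]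
    {f : A → S} {g : B → S} (hf : Continuous f) (hg : Continuous g)
    (h : ∀ s : S, (∃ a, f a = s) ∨ (∃ b, g b = s)) :
    TopologicalSpace.SeparableSpace S := by
  rw [← TopologicalSpace.isSeparable_univ_iff]
  have huniv : (Set.univ : Set S) = Set.range f ∪ Set.range g := by
    ext s; simpa [Set.mem_union, Set.mem_range] using (h s)
  rw [huniv]
  have h1 : TopologicalSpace.IsSeparable (Set.range f) := by
    rw [← Set.image_univ]
    exact (TopologicalSpace.IsSeparable.of_separableSpace _).image hf
  have h2 : TopologicalSpace.IsSeparable (Set.range g) := by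
    rw [← Set.image_univ]
    exact (TopologicalSpace.IsSeparable.of_separableSpace _).image hg
  exact h1.union h2

lemma glueSpace_separable {X Y Z : Type} [Nonempty Z] [MetricSpace Z] [MetricSpace X]
    [MetricSpace Y] [TopologicalSpace.SeparableSpace X] [TopologicalSpace.SeparableSpace Y]
    {Φ : Z → X} {Ψ : Z → Y} (hΦ : Isometry Φ) (hΨ : Isometry Ψ) :
    TopologicalSpace.SeparableSpace (Metric.GlueSpace hΦ hΨ) := by
  refine separableSpace_of_pair (Metric.toGlueL_isometry hΦ hΨ).continuous
    (Metric.toGlueR_isometry hΦ hΨ).continuous ?_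
  intro s
  obtain ⟨a, rfl⟩ := Quotient.exists_rep s
  cases a with
  | inl x => exact Or.inl ⟨x, rfl⟩
  | inr y => exact Or.inr ⟨y, rfl⟩

end AuxSep
set_option linter.unusedSectionVars false
section AuxMGP

variable {I X₁ X₂ : Type} [MetricSpace I] [TopologicalSpace.SeparableSpace I]
  [MeasurableSpace I] [BorelSpace I]
  [MetricSpace X₁] [TopologicalSpace.SeparableSpace X₁] [MeasurableSpace X₁] [BorelSpace X₁]
  [MetricSpace X₂] [TopologicalSpace.SeparableSpace X₂] [MeasurableSpace X₂] [BorelSpace X₂]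

/-- The defining set of the marked Gromov-Prohorov distance. -/
def mGPSet (μ₁ : Measure (X₁ × I)) (μ₂ : Measure (X₂ × I)) : Set ℝ :=
  {d : ℝ | ∃ (Z : Type) (_ : MetricSpace Z) (_ : MeasurableSpace Z),
    BorelSpace Z ∧ TopologicalSpace.SeparableSpace Z ∧ CompleteSpace Z ∧
    ∃ (φ₁ : X₁ → Z) (φ₂ : X₂ → Z), Isometry φ₁ ∧ Isometry φ₂ ∧
      d = prohorovDistSum (μ₁.map (Prod.map φ₁ id)) (μ₂.map (Prod.map φ₂ id))}

lemma mGPDist_eq_sInf (μ₁ : Measure (X₁ × I)) (μ₂ : Measure (X₂ × I)) :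
    mGPDist μ₁ μ₂ = sInf (mGPSet μ₁ μ₂) := rfl

lemma mGPSet_nonneg (μ₁ : Measure (X₁ × I)) (μ₂ : Measure (X₂ × I)) :
    ∀ d ∈ mGPSet μ₁ μ₂, 0 ≤ d := by
  rintro d ⟨Z, _, _, _, _, _, φ₁, φ₂, _, _, rfl⟩
  exact Real.sInf_nonneg (fun ε hε => hε.1.le)

lemma bddBelow_mGPSet (μ₁ : Measure (X₁ × I)) (μ₂ : Measure (X₂ × I)) :
    BddBelow (mGPSet μ₁ μ₂) := ⟨0, mGPSet_nonneg μ₁ μ₂⟩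

lemma mGPSet_nonempty (μ₁ : Measure (X₁ × I)) (μ₂ : Measure (X₂ × I)) :
    (mGPSet μ₁ μ₂).Nonempty := by
  letI : MetricSpace (X₁ ⊕ X₂) := Metric.metricSpaceSum
  haveI : TopologicalSpace.SeparableSpace (X₁ ⊕ X₂) :=
    separableSpace_of_pair Metric.isometry_inl.continuous Metric.isometry_inr.continuous
      (fun s => by cases s with
        | inl x => exact Or.inl ⟨x, rfl⟩
        | inr y => exact Or.inr ⟨y, rfl⟩)
  letI : MeasurableSpace (UniformSpace.Completion (X₁ ⊕ X₂)) :=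
    borel (UniformSpace.Completion (X₁ ⊕ X₂))
  haveI : BorelSpace (UniformSpace.Completion (X₁ ⊕ X₂)) := ⟨rfl⟩
  exact ⟨_, UniformSpace.Completion (X₁ ⊕ X₂), inferInstance, inferInstance, inferInstance,
    inferInstance, inferInstance,
    ((↑) : (X₁ ⊕ X₂) → UniformSpace.Completion (X₁ ⊕ X₂)) ∘ Sum.inl,
    ((↑) : (X₁ ⊕ X₂) → UniformSpace.Completion (X₁ ⊕ X₂)) ∘ Sum.inr,
    UniformSpace.Completion.coe_isometry.comp Metric.isometry_inl,
    UniformSpace.Completion.coe_isometry.comp Metric.isometry_inr, rfl⟩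

end AuxMGP

/-- the marked Gromov-Prohorov distance satisfies the triangle
inequality. -/
theorem mGPDist_triangle
    {I : Type} [MetricSpace I] [CompleteSpace I] [TopologicalSpace.SeparableSpace I]
    [MeasurableSpace I] [BorelSpace I]
    {X₁ : Type} [MetricSpace X₁] [CompleteSpace X₁] [TopologicalSpace.SeparableSpace X₁]
    [MeasurableSpace X₁] [BorelSpace X₁]
    {X₂ : Type} [MetricSpace X₂] [CompleteSpace X₂] [TopologicalSpace.SeparableSpace X₂]
    [MeasurableSpace X₂] [BorelSpace X₂]
    {X₃ : Type} [MetricSpace X₃] [CompleteSpace X₃] [TopologicalSpace.SeparableSpace X₃]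
    [MeasurableSpace X₃] [BorelSpace X₃]
    (μ₁ : Measure (X₁ × I)) [IsProbabilityMeasure μ₁]
    (μ₂ : Measure (X₂ × I)) [IsProbabilityMeasure μ₂]
    (μ₃ : Measure (X₃ × I)) [IsProbabilityMeasure μ₃] :
    mGPDist μ₁ μ₃ ≤ mGPDist μ₁ μ₂ + mGPDist μ₂ μ₃ := by
  haveI : SecondCountableTopology I := UniformSpace.secondCountable_of_separable I
  haveI : SecondCountableTopology X₁ := UniformSpace.secondCountable_of_separable X₁
  haveI : SecondCountableTopology X₂ := UniformSpace.secondCountable_of_separable X₂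
  haveI : SecondCountableTopology X₃ := UniformSpace.secondCountable_of_separable X₃
  haveI : Nonempty X₂ := by
    by_contra h
    rw [not_nonempty_iff] at h
    have h1 : (μ₂ Set.univ) = 1 := measure_univ
    rw [show (Set.univ : Set (X₂ × I)) = ∅ from Set.univ_eq_empty_iff.mpr inferInstance,
      measure_empty] at h1
    exact zero_ne_one h1
  rw [mGPDist_eq_sInf μ₁ μ₃, mGPDist_eq_sInf μ₁ μ₂, mGPDist_eq_sInf μ₂ μ₃]
  have key : ∀ d₁ ∈ mGPSet μ₁ μ₂, ∀ d₂ ∈ mGPSet μ₂ μ₃, sInf (mGPSet μ₁ μ₃) ≤ d₁ + d₂ := by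
    intro d₁ hd₁ d₂ hd₂
    obtain ⟨Z, iZ1, iZ2, iZ3, iZ4, iZ5, φ₁, φ₂, hφ₁, hφ₂, rfl⟩ := hd₁
    obtain ⟨W, iW1, iW2, iW3, iW4, iW5, ψ₂, ψ₃, hψ₂, hψ₃, rfl⟩ := hd₂
    haveI : SecondCountableTopology Z := UniformSpace.secondCountable_of_separable Z
    haveI : SecondCountableTopology W := UniformSpace.secondCountable_of_separable W
    haveI : TopologicalSpace.SeparableSpace (Metric.GlueSpace hφ₂ hψ₂) :=
      glueSpace_separable hφ₂ hψ₂
    set G := UniformSpace.Completion (Metric.GlueSpace hφ₂ hψ₂) with hG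
    letI : MeasurableSpace G := borel G
    haveI : BorelSpace G := ⟨rfl⟩
    haveI : SecondCountableTopology G := UniformSpace.secondCountable_of_separable G
    set ιL : Z → G := ((↑) : Metric.GlueSpace hφ₂ hψ₂ → G) ∘ Metric.toGlueL hφ₂ hψ₂ with hιLdef
    set ιR : W → G := ((↑) : Metric.GlueSpace hφ₂ hψ₂ → G) ∘ Metric.toGlueR hφ₂ hψ₂ with hιRdef
    have hιL : Isometry ιL :=
      UniformSpace.Completion.coe_isometry.comp (Metric.toGlueL_isometry hφ₂ hψ₂)
    have hιR : Isometry ιR :=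
      UniformSpace.Completion.coe_isometry.comp (Metric.toGlueR_isometry hφ₂ hψ₂)
    have hcomm : ιL ∘ φ₂ = ιR ∘ ψ₂ := by
      funext x
      show ((↑) : Metric.GlueSpace hφ₂ hψ₂ → G) (Metric.toGlueL hφ₂ hψ₂ (φ₂ x))
        = ((↑) : Metric.GlueSpace hφ₂ hψ₂ → G) (Metric.toGlueR hφ₂ hψ₂ (ψ₂ x))
      exact congrArg _ (congrFun (Metric.toGlue_commute hφ₂ hψ₂) x)
    -- measurability
    have hf₁ : Measurable (Prod.map φ₁ (id : I → I)) :=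
      (hφ₁.continuous.prodMap continuous_id).measurable
    have hf₂ : Measurable (Prod.map φ₂ (id : I → I)) :=
      (hφ₂.continuous.prodMap continuous_id).measurable
    have hg₂ : Measurable (Prod.map ψ₂ (id : I → I)) :=
      (hψ₂.continuous.prodMap continuous_id).measurable
    have hg₃ : Measurable (Prod.map ψ₃ (id : I → I)) :=
      (hψ₃.continuous.prodMap continuous_id).measurable
    have hgL : Measurable (Prod.map ιL (id : I → I)) :=
      (hιL.continuous.prodMap continuous_id).measurable
    have hgR : Measurable (Prod.map ιR (id : I → I)) :=
      (hιR.continuous.prodMap continuous_id).measurable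
    have hη₁ : Measurable (Prod.map (ιL ∘ φ₁) (id : I → I)) :=
      ((hιL.comp hφ₁).continuous.prodMap continuous_id).measurable
    have hη₂ : Measurable (Prod.map (ιL ∘ φ₂) (id : I → I)) :=
      ((hιL.comp hφ₂).continuous.prodMap continuous_id).measurable
    have hη₃ : Measurable (Prod.map (ιR ∘ ψ₃) (id : I → I)) :=
      ((hιR.comp hψ₃).continuous.prodMap continuous_id).measurable
    -- measures on G
    set ν₁ : Measure (G × I) := μ₁.map (Prod.map (ιL ∘ φ₁) id) with hν₁
    set ν₂ : Measure (G × I) := μ₂.map (Prod.map (ιL ∘ φ₂) id) with hν₂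
    set ν₃ : Measure (G × I) := μ₃.map (Prod.map (ιR ∘ ψ₃) id) with hν₃
    haveI : IsProbabilityMeasure ν₁ := Measure.isProbabilityMeasure_map hη₁.aemeasurable
    haveI : IsProbabilityMeasure ν₂ := Measure.isProbabilityMeasure_map hη₂.aemeasurable
    haveI : IsProbabilityMeasure ν₃ := Measure.isProbabilityMeasure_map hη₃.aemeasurable
    haveI : IsProbabilityMeasure (μ₁.map (Prod.map φ₁ (id : I → I))) :=
      Measure.isProbabilityMeasure_map hf₁.aemeasurable
    haveI : IsProbabilityMeasure (μ₂.map (Prod.map φ₂ (id : I → I))) :=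
      Measure.isProbabilityMeasure_map hf₂.aemeasurable
    haveI : IsProbabilityMeasure (μ₂.map (Prod.map ψ₂ (id : I → I))) :=
      Measure.isProbabilityMeasure_map hg₂.aemeasurable
    haveI : IsProbabilityMeasure (μ₃.map (Prod.map ψ₃ (id : I → I))) :=
      Measure.isProbabilityMeasure_map hg₃.aemeasurable
    -- step 1 : membership
    have step1 : sInf (mGPSet μ₁ μ₃) ≤ prohorovDistSum ν₁ ν₃ :=
      csInf_le (bddBelow_mGPSet μ₁ μ₃)
        ⟨G, inferInstance, inferInstance, inferInstance, inferInstance, inferInstance,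
          ιL ∘ φ₁, ιR ∘ ψ₃, hιL.comp hφ₁, hιR.comp hψ₃, rfl⟩
    -- step 2 : Prohorov triangle inequality in G
    have step2 : prohorovDistSum ν₁ ν₃ ≤ prohorovDistSum ν₁ ν₂ + prohorovDistSum ν₂ ν₃ :=
      prohorovDistSum_triangle ν₁ ν₂ ν₃
    -- step 3
    have e₁ : ν₁ = (μ₁.map (Prod.map φ₁ id)).map (Prod.map ιL id) := by
      rw [hν₁, Measure.map_map hgL hf₁]
      congr 1
    have e₂ : ν₂ = (μ₂.map (Prod.map φ₂ id)).map (Prod.map ιL id) := by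
      rw [hν₂, Measure.map_map hgL hf₂]
      congr 1
    have e₂' : ν₂ = (μ₂.map (Prod.map ψ₂ id)).map (Prod.map ιR id) := by
      rw [hν₂, hcomm, Measure.map_map hgR hg₂]
      congr 1
    have e₃ : ν₃ = (μ₃.map (Prod.map ψ₃ id)).map (Prod.map ιR id) := by
      rw [hν₃, Measure.map_map hgR hg₃]
      congr 1
    have step3 : prohorovDistSum ν₁ ν₂
        ≤ prohorovDistSum (μ₁.map (Prod.map φ₁ id)) (μ₂.map (Prod.map φ₂ id)) := by
      rw [e₁, e₂]
      exact prohorovDistSum_map_le_s5 hιL hgL _ _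
    have step4 : prohorovDistSum ν₂ ν₃
        ≤ prohorovDistSum (μ₂.map (Prod.map ψ₂ id)) (μ₃.map (Prod.map ψ₃ id)) := by
      rw [e₂', e₃]
      exact prohorovDistSum_map_le_s5 hιR hgR _ _
    linarith
  have hne12 := mGPSet_nonempty μ₁ μ₂
  have hne23 := mGPSet_nonempty μ₂ μ₃
  have h23 : ∀ d₁ ∈ mGPSet μ₁ μ₂, sInf (mGPSet μ₁ μ₃) - d₁ ≤ sInf (mGPSet μ₂ μ₃) :=
    fun d₁ h₁ => le_csInf hne23 (fun d₂ h₂ => by linarith [key d₁ h₁ d₂ h₂])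
  have h12 : sInf (mGPSet μ₁ μ₃) - sInf (mGPSet μ₂ μ₃) ≤ sInf (mGPSet μ₁ μ₂) :=
    le_csInf hne12 (fun d₁ h₁ => by linarith [h23 d₁ h₁])
  linarith


end
end

section
/- Let (X, r_X, μ_X) and (X_n, r_n, μ_n), n ≥ 1, be I-marked metric measure spaces. Then d_MGP((X_n,r_n,μ_n),(X,r_X,μ_X)) → 0 as n → ∞ if and only if there exist a complete separable metric space (Z, r_Z) and isometric embeddings φ_X : X → Z and φ_n : X_n → Z, n ≥ 1, such that the Prohorov distance between (φ̃_n)_*μ_n and (φ̃_X)_*μ_X on Z × I (with metric r_Z + r_I) tends to 0 as n → ∞, where φ̃(x, u) = (φ(x), u). -/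
open MeasureTheory Topology Filter NNReal BoundedContinuousFunction

noncomputable section

namespace MGPAux

open TopologicalSpace

theorem prohorovDistSum_nonneg {Z I : Type} [PseudoMetricSpace Z] [PseudoMetricSpace I]
    {m : MeasurableSpace (Z × I)} (μ ν : Measure (Z × I)) :
    0 ≤ prohorovDistSum μ ν :=
  Real.sInf_nonneg fun _ hx => hx.1.le

theorem prohorovDistSum_map_eq {I Z₁ Z₂ : Type} [PseudoMetricSpace I] [MeasurableSpace I]
    [PseudoMetricSpace Z₁] [PseudoMetricSpace Z₂]
    [MeasurableSpace Z₁] [MeasurableSpace Z₂]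
    (φ : Z₁ → Z₂) (hd : ∀ a b, dist (φ a) (φ b) = dist a b)
    (hme : MeasurableEmbedding (Prod.map φ (id : I → I)))
    (μ ν : Measure (Z₁ × I)) :
    prohorovDistSum (μ.map (Prod.map φ id)) (ν.map (Prod.map φ id)) = prohorovDistSum μ ν := by
  unfold prohorovDistSum
  congr 1
  have hpair : ∀ p q : Z₁ × I, pairDist (Prod.map φ id p) (Prod.map φ id q) = pairDist p q := by
    intro p q; simp [pairDist, hd]
  ext ε
  constructor
  · rintro ⟨hε, h⟩
    refine ⟨hε, fun A hA => ?_⟩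
    obtain ⟨h1, h2⟩ := h (Prod.map φ id '' A) (hme.measurableSet_image.2 hA)
    simp only [hme.map_apply, Set.preimage_image_eq _ hme.injective] at h1 h2
    have hsub : ∀ (ρ : Measure (Z₁ × I)),
        ρ ((Prod.map φ id) ⁻¹' {q | ∃ p ∈ Prod.map φ id '' A, pairDist p q < ε})
          ≤ ρ {q | ∃ p ∈ A, pairDist p q < ε} := by
      intro ρ
      apply measure_mono
      rintro y ⟨p, ⟨a, ha, rfl⟩, hp⟩
      exact ⟨a, ha, by rwa [hpair] at hp⟩
    exact ⟨h1.trans (add_le_add_left (hsub ν) _), h2.trans (add_le_add_left (hsub μ) _)⟩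
  · rintro ⟨hε, h⟩
    refine ⟨hε, fun B hB => ?_⟩
    obtain ⟨h1, h2⟩ := h ((Prod.map φ id) ⁻¹' B) (hme.measurable hB)
    simp only [hme.map_apply]
    have hsub : ∀ (ρ : Measure (Z₁ × I)),
        ρ {q | ∃ p ∈ (Prod.map φ id) ⁻¹' B, pairDist p q < ε}
          ≤ ρ ((Prod.map φ id) ⁻¹' {q | ∃ p ∈ B, pairDist p q < ε}) := by
      intro ρ
      apply measure_mono
      rintro y ⟨p, hp, hd'⟩
      exact ⟨Prod.map φ id p, hp, by rwa [hpair]⟩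
    exact ⟨h1.trans (add_le_add_left (hsub ν) _), h2.trans (add_le_add_left (hsub μ) _)⟩

section Glue

variable {X U : Type} [MetricSpace X] [MetricSpace U] (ψ : ℕ → X → U)

/-- The glued distance on `X ⊕ ℕ × U`, where each `ψ n` is an isometric copy of `X` in `U`. -/
def glueD : (X ⊕ ℕ × U) → (X ⊕ ℕ × U) → ℝ
  | .inl x, .inl y => dist x y
  | .inl x, .inr z => dist (ψ z.1 x) z.2
  | .inr z, .inl y => dist z.2 (ψ z.1 y)
  | .inr z, .inr w =>
      if z.1 = w.1 then dist z.2 w.2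
      else ⨅ x : X, (dist z.2 (ψ z.1 x) + dist (ψ w.1 x) w.2)

theorem glueD_inl_inl (x y : X) : glueD ψ (.inl x) (.inl y) = dist x y := rfl

theorem glueD_inl_inr (x : X) (z : ℕ × U) : glueD ψ (.inl x) (.inr z) = dist (ψ z.1 x) z.2 := rfl

theorem glueD_inr_inl (z : ℕ × U) (y : X) : glueD ψ (.inr z) (.inl y) = dist z.2 (ψ z.1 y) := rfl

theorem glueD_inr_same (n : ℕ) (z w : U) :
    glueD ψ (.inr (n, z)) (.inr (n, w)) = dist z w := by simp [glueD]

theorem glueD_inr_ne {n m : ℕ} (h : n ≠ m) (z w : U) :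
    glueD ψ (.inr (n, z)) (.inr (m, w))
      = ⨅ x : X, (dist z (ψ n x) + dist (ψ m x) w) := by simp [glueD, h]

omit [MetricSpace X] in
theorem glueD_bddBelow (z w : ℕ × U) :
    BddBelow (Set.range fun x : X => dist z.2 (ψ z.1 x) + dist (ψ w.1 x) w.2) := by
  refine ⟨0, ?_⟩; rintro _ ⟨x, rfl⟩; positivity

theorem glueD_cross_le (z w : ℕ × U) (x : X) :
    glueD ψ (.inr z) (.inr w) ≤ dist z.2 (ψ z.1 x) + dist (ψ w.1 x) w.2 := by
  simp only [glueD]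
  split
  · rename_i h
    calc dist z.2 w.2 ≤ dist z.2 (ψ z.1 x) + dist (ψ z.1 x) w.2 := dist_triangle _ _ _
    _ = _ := by rw [h]
  · exact ciInf_le (glueD_bddBelow ψ z w) x

theorem le_glueD_cross [Nonempty X] {z w : ℕ × U} (h : z.1 ≠ w.1) {c : ℝ}
    (hc : ∀ x, c ≤ dist z.2 (ψ z.1 x) + dist (ψ w.1 x) w.2) :
    c ≤ glueD ψ (.inr z) (.inr w) := by
  simp only [glueD, if_neg h]
  exact le_ciInf hc

theorem glueD_self : ∀ a, glueD ψ a a = 0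
  | .inl x => dist_self x
  | .inr z => by simp [glueD]

theorem glueD_comm : ∀ a b, glueD ψ a b = glueD ψ b a
  | .inl x, .inl y => dist_comm x y
  | .inl x, .inr z => dist_comm _ _
  | .inr z, .inl y => dist_comm _ _
  | .inr z, .inr w => by
      simp only [glueD]
      rcases eq_or_ne z.1 w.1 with h | h
      · rw [if_pos h, if_pos h.symm, dist_comm]
      · rw [if_neg h, if_neg (Ne.symm h)]
        exact iInf_congr fun x => by rw [dist_comm z.2, dist_comm (ψ w.1 x), add_comm]

variable [Nonempty X]

theorem glueD_triangle (hψ : ∀ n x y, dist (ψ n x) (ψ n y) = dist x y) :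
    ∀ a b c, glueD ψ a c ≤ glueD ψ a b + glueD ψ b c
  | .inl x, .inl y, .inl u => dist_triangle x y u
  | .inl x, .inl y, .inr w => by
      simp only [glueD_inl_inl, glueD_inl_inr]
      calc dist (ψ w.1 x) w.2 ≤ dist (ψ w.1 x) (ψ w.1 y) + dist (ψ w.1 y) w.2 :=
            dist_triangle _ _ _
      _ = dist x y + dist (ψ w.1 y) w.2 := by rw [hψ]
  | .inl x, .inr z, .inl u => by
      simp only [glueD_inl_inl, glueD_inl_inr, glueD_inr_inl]
      calc dist x u = dist (ψ z.1 x) (ψ z.1 u) := (hψ _ _ _).symm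
      _ ≤ dist (ψ z.1 x) z.2 + dist z.2 (ψ z.1 u) := dist_triangle _ _ _
  | .inl x, .inr z, .inr w => by
      simp only [glueD_inl_inr]
      rcases eq_or_ne z.1 w.1 with h | h
      · obtain ⟨n, z2⟩ := z; obtain ⟨m, w2⟩ := w
        simp only at h; subst h
        rw [glueD_inr_same]
        exact dist_triangle _ z2 w2
      · have key : ∀ y, dist (ψ w.1 x) w.2 - dist (ψ z.1 x) z.2
            ≤ dist z.2 (ψ z.1 y) + dist (ψ w.1 y) w.2 := by
          intro y
          have t1 := dist_triangle (ψ w.1 x) (ψ w.1 y) w.2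
          have t2 := dist_triangle (ψ z.1 x) z.2 (ψ z.1 y)
          have e1 := hψ w.1 x y
          have e2 := hψ z.1 x y
          linarith
        have := le_glueD_cross ψ h key
        linarith
  | .inr z, .inl y, .inl u => by
      simp only [glueD_inr_inl, glueD_inl_inl]
      calc dist z.2 (ψ z.1 u) ≤ dist z.2 (ψ z.1 y) + dist (ψ z.1 y) (ψ z.1 u) :=
            dist_triangle _ _ _
      _ = dist z.2 (ψ z.1 y) + dist y u := by rw [hψ]
  | .inr z, .inl y, .inr w => by
      simpa only [glueD_inr_inl, glueD_inl_inr] using glueD_cross_le ψ z w y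
  | .inr z, .inr v, .inl u => by
      simp only [glueD_inr_inl]
      rcases eq_or_ne z.1 v.1 with h | h
      · obtain ⟨n, z2⟩ := z; obtain ⟨k, v2⟩ := v
        simp only at h; subst h
        rw [glueD_inr_same]
        exact dist_triangle z2 v2 _
      · have key : ∀ y, dist z.2 (ψ z.1 u) - dist v.2 (ψ v.1 u)
            ≤ dist z.2 (ψ z.1 y) + dist (ψ v.1 y) v.2 := by
          intro y
          have t1 := dist_triangle z.2 (ψ z.1 y) (ψ z.1 u)
          have t2 := dist_triangle (ψ v.1 y) v.2 (ψ v.1 u)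
          have e1 := hψ z.1 y u
          have e2 := hψ v.1 y u
          linarith
        have := le_glueD_cross ψ h key
        linarith
  | .inr (n, z), .inr (k, v), .inr (m, w) => by
      rcases eq_or_ne n k with rfl | h1
      · rw [glueD_inr_same]
        rcases eq_or_ne n m with rfl | h2
        · rw [glueD_inr_same, glueD_inr_same]
          exact dist_triangle _ _ _
        · rw [glueD_inr_ne ψ h2, glueD_inr_ne ψ h2]
          have step : ∀ y : X, (⨅ x : X, (dist z (ψ n x) + dist (ψ m x) w)) - dist z v
              ≤ dist v (ψ n y) + dist (ψ m y) w := by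
            intro y
            have h0 : (⨅ x : X, (dist z (ψ n x) + dist (ψ m x) w))
                ≤ dist z (ψ n y) + dist (ψ m y) w :=
              ciInf_le (glueD_bddBelow ψ (n, z) (m, w)) y
            have t1 := dist_triangle z v (ψ n y)
            linarith
          have := le_ciInf step
          linarith
      · rw [glueD_inr_ne ψ h1]
        rcases eq_or_ne k m with rfl | h2
        · rw [glueD_inr_same, glueD_inr_ne ψ h1]
          have step : ∀ x : X, (⨅ x : X, (dist z (ψ n x) + dist (ψ k x) w)) - dist v w
              ≤ dist z (ψ n x) + dist (ψ k x) v := by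
            intro x
            have h0 : (⨅ x : X, (dist z (ψ n x) + dist (ψ k x) w))
                ≤ dist z (ψ n x) + dist (ψ k x) w :=
              ciInf_le (glueD_bddBelow ψ (n, z) (k, w)) x
            have t1 := dist_triangle (ψ k x) v w
            linarith
          have := le_ciInf step
          linarith
        · rw [glueD_inr_ne ψ h2]
          have key : ∀ x y : X, glueD ψ (.inr (n, z)) (.inr (m, w))
              ≤ dist z (ψ n x) + dist (ψ k x) v + (dist v (ψ k y) + dist (ψ m y) w) := by
            intro x y
            have h0 := glueD_cross_le ψ (n, z) (m, w) y
            simp only at h0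
            have t1 := dist_triangle z (ψ n x) (ψ n y)
            have t2 := dist_triangle (ψ k x) v (ψ k y)
            have e1 := hψ n x y
            have e2 := hψ k x y
            linarith
          have step1 : ∀ x : X, glueD ψ (.inr (n, z)) (.inr (m, w))
              - (⨅ y : X, (dist v (ψ k y) + dist (ψ m y) w))
              ≤ dist z (ψ n x) + dist (ψ k x) v := by
            intro x
            have h0 : (⨅ y : X, (dist v (ψ k y) + dist (ψ m y) w))
                ≥ glueD ψ (.inr (n, z)) (.inr (m, w)) - (dist z (ψ n x) + dist (ψ k x) v) :=
              le_ciInf fun y => by linarith [key x y]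
            linarith [h0]
          have := le_ciInf step1
          linarith

/-- The glued pseudometric space. -/
def gluePseudo (hψ : ∀ n x y, dist (ψ n x) (ψ n y) = dist x y) :
    PseudoMetricSpace (X ⊕ ℕ × U) where
  dist := glueD ψ
  dist_self := glueD_self ψ
  dist_comm := glueD_comm ψ
  dist_triangle := glueD_triangle ψ hψ

end Glue

theorem exists_embedding_pair (X₁ X₂ : Type) [MetricSpace X₁]
    [TopologicalSpace.SeparableSpace X₁] [MetricSpace X₂]
    [TopologicalSpace.SeparableSpace X₂] :
    ∃ (Z : Type) (_ : MetricSpace Z) (_ : MeasurableSpace Z),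
      BorelSpace Z ∧ TopologicalSpace.SeparableSpace Z ∧ CompleteSpace Z ∧
      ∃ (φ₁ : X₁ → Z) (φ₂ : X₂ → Z), Isometry φ₁ ∧ Isometry φ₂ := by
  let U : Type := ↥(lp (fun _ : ℕ => ℝ) ⊤)
  let k₁ : X₁ → U := kuratowskiEmbedding X₁
  let k₂ : X₂ → U := kuratowskiEmbedding X₂
  have hk₁ : Isometry k₁ := kuratowskiEmbedding.isometry X₁
  have hk₂ : Isometry k₂ := kuratowskiEmbedding.isometry X₂
  set S : Set U := closure (Set.range k₁ ∪ Set.range k₂) with hS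
  have hsep : TopologicalSpace.IsSeparable S :=
    ((TopologicalSpace.isSeparable_range hk₁.continuous).union
      (TopologicalSpace.isSeparable_range hk₂.continuous)).closure
  letI : MeasurableSpace S := borel S
  haveI : BorelSpace S := ⟨rfl⟩
  refine ⟨S, inferInstance, inferInstance, inferInstance, hsep.separableSpace,
    (isClosed_closure).completeSpace_coe,
    (fun x => ⟨k₁ x, subset_closure (Or.inl ⟨x, rfl⟩)⟩),
    (fun x => ⟨k₂ x, subset_closure (Or.inr ⟨x, rfl⟩)⟩), ?_, ?_⟩
  · exact Isometry.of_dist_eq fun a b => by rw [Subtype.dist_eq]; exact hk₁.dist_eq a b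
  · exact Isometry.of_dist_eq fun a b => by rw [Subtype.dist_eq]; exact hk₂.dist_eq a b

theorem mGPDist_lt_add {I X₁ X₂ : Type} [MetricSpace I] [MeasurableSpace I]
    [MetricSpace X₁] [TopologicalSpace.SeparableSpace X₁] [MeasurableSpace X₁]
    [MetricSpace X₂] [TopologicalSpace.SeparableSpace X₂] [MeasurableSpace X₂]
    (μ₁ : Measure (X₁ × I)) (μ₂ : Measure (X₂ × I)) {δ : ℝ} (hδ : 0 < δ) :
    ∃ (Z : Type) (_ : MetricSpace Z) (_ : MeasurableSpace Z),
      BorelSpace Z ∧ TopologicalSpace.SeparableSpace Z ∧ CompleteSpace Z ∧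
      ∃ (φ₁ : X₁ → Z) (φ₂ : X₂ → Z), Isometry φ₁ ∧ Isometry φ₂ ∧
        prohorovDistSum (μ₁.map (Prod.map φ₁ id)) (μ₂.map (Prod.map φ₂ id))
          < mGPDist μ₁ μ₂ + δ := by
  set Sd : Set ℝ := {d : ℝ | ∃ (Z : Type) (_ : MetricSpace Z) (_ : MeasurableSpace Z),
    BorelSpace Z ∧ TopologicalSpace.SeparableSpace Z ∧ CompleteSpace Z ∧
    ∃ (φ₁ : X₁ → Z) (φ₂ : X₂ → Z), Isometry φ₁ ∧ Isometry φ₂ ∧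
      d = prohorovDistSum (μ₁.map (Prod.map φ₁ id)) (μ₂.map (Prod.map φ₂ id))} with hSd
  have hne : Sd.Nonempty := by
    obtain ⟨Z, mz, ms, hb, hsep, hcomp, φ₁, φ₂, h1, h2⟩ := exists_embedding_pair X₁ X₂
    exact ⟨_, Z, mz, ms, hb, hsep, hcomp, φ₁, φ₂, h1, h2, rfl⟩
  have hmg : mGPDist μ₁ μ₂ = sInf Sd := rfl
  have hlt : sInf Sd < mGPDist μ₁ μ₂ + δ := by rw [hmg]; linarith
  obtain ⟨d, hdS, hdlt⟩ := exists_lt_of_csInf_lt hne hlt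
  obtain ⟨Z, mz, ms, hb, hsep, hcomp, φ₁, φ₂, h1, h2, rfl⟩ := hdS
  exact ⟨Z, mz, ms, hb, hsep, hcomp, φ₁, φ₂, h1, h2, hdlt⟩

end MGPAux

/-- Lemma 3.3: `d_MGP((Xₙ,rₙ,μₙ),(X,r_X,μ_X)) → 0` if and only if all
spaces can be isometrically embedded into one complete separable metric space `Z` such
that the Prohorov distances (for the sum metric on `Z × I`) of the pushforward measures
converge to `0`. -/
theorem mGPDist_tendsto_zero_iff_common_embedding
    {I : Type} [MetricSpace I] [CompleteSpace I] [TopologicalSpace.SeparableSpace I]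
    [MeasurableSpace I] [BorelSpace I]
    {X : Type} [MetricSpace X] [CompleteSpace X] [TopologicalSpace.SeparableSpace X]
    [MeasurableSpace X] [BorelSpace X]
    (μX : Measure (X × I)) [IsProbabilityMeasure μX]
    (Xn : ℕ → Type) [∀ n, MetricSpace (Xn n)] [∀ n, CompleteSpace (Xn n)]
    [∀ n, TopologicalSpace.SeparableSpace (Xn n)]
    [∀ n, MeasurableSpace (Xn n)] [∀ n, BorelSpace (Xn n)]
    (μn : (n : ℕ) → Measure (Xn n × I)) [∀ n, IsProbabilityMeasure (μn n)] :
    Tendsto (fun n => mGPDist (μn n) μX) atTop (𝓝 0) ↔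
      ∃ (Z : Type) (_ : MetricSpace Z) (_ : MeasurableSpace Z),
        BorelSpace Z ∧ TopologicalSpace.SeparableSpace Z ∧ CompleteSpace Z ∧
        ∃ (φX : X → Z) (φn : (n : ℕ) → Xn n → Z),
          Isometry φX ∧ (∀ n, Isometry (φn n)) ∧
          Tendsto
            (fun n => prohorovDistSum ((μn n).map (Prod.map (φn n) (id : I → I)))
              (μX.map (Prod.map φX (id : I → I))))
            atTop (𝓝 0) := by
  open MGPAux in
  constructor
  · intro hconv
    classical
    -- `X` is nonempty since `μX` is a probability measure
    haveI hXne : Nonempty X := by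
      rcases Set.eq_empty_or_nonempty (Set.univ : Set (X × I)) with h | h
      · have h1 : μX Set.univ = 1 := measure_univ
        rw [h, measure_empty] at h1
        exact absurd h1 (by simp)
      · exact ⟨h.choose.1⟩
    -- choose near-optimal embeddings for each `n`
    have hex : ∀ n : ℕ, ∃ (Z : Type) (_ : MetricSpace Z) (_ : MeasurableSpace Z),
        BorelSpace Z ∧ TopologicalSpace.SeparableSpace Z ∧ CompleteSpace Z ∧
        ∃ (φ₁ : Xn n → Z) (φ₂ : X → Z), Isometry φ₁ ∧ Isometry φ₂ ∧
          prohorovDistSum ((μn n).map (Prod.map φ₁ id)) (μX.map (Prod.map φ₂ id))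
            < mGPDist (μn n) μX + 1 / (n + 1) := fun n =>
      mGPDist_lt_add (μn n) μX (by positivity)
    choose Z mZ msZ hbZ hsepZ hcompZ α β hα hβ hlt using hex
    -- flatten all `Z n` into `ℓ^∞(ℕ)`
    let U : Type := ↥(lp (fun _ : ℕ => ℝ) ⊤)
    let k : ∀ n, Z n → U := fun n => @kuratowskiEmbedding (Z n) (mZ n) (hsepZ n)
    let ψ : ℕ → X → U := fun n x => k n (β n x)
    have hψ : ∀ n x y, dist (ψ n x) (ψ n y) = dist x y := by
      intro n x y
      letI := mZ n; haveI := hsepZ n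
      rw [(kuratowskiEmbedding.isometry (Z n)).dist_eq, (hβ n).dist_eq]
    -- the glued space and its completion
    letI instW : PseudoMetricSpace (X ⊕ ℕ × U) := gluePseudo ψ hψ
    let C : Type := @UniformSpace.Completion (X ⊕ ℕ × U) instW.toUniformSpace
    letI : MetricSpace C :=
      inferInstanceAs (MetricSpace (@UniformSpace.Completion (X ⊕ ℕ × U) instW.toUniformSpace))
    haveI : CompleteSpace C :=
      inferInstanceAs (CompleteSpace (@UniformSpace.Completion (X ⊕ ℕ × U) instW.toUniformSpace))
    letI : MeasurableSpace C := borel C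
    haveI : BorelSpace C := ⟨rfl⟩
    let ι : (X ⊕ ℕ × U) → C := fun w => (w : C)
    have hι : ∀ a b, dist (ι a) (ι b) = glueD ψ a b := fun a b =>
      UniformSpace.Completion.dist_eq a b
    let θ : ∀ n, Z n → C := fun n z => ι (Sum.inr (n, k n z))
    have hθd : ∀ n z w, dist (θ n z) (θ n w) = @dist (Z n) (mZ n).toDist z w := by
      intro n z w
      rw [hι, glueD_inr_same]
      letI := mZ n; haveI := hsepZ n
      exact (kuratowskiEmbedding.isometry (Z n)).dist_eq z w
    have hθiso : ∀ n, @Isometry (Z n) C _ _ (θ n) := by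
      intro n; letI := mZ n
      exact Isometry.of_dist_eq (hθd n)
    have hglue0 : ∀ n x, ι (Sum.inl x) = θ n (β n x) := by
      intro n x
      have h0 : dist (ι (Sum.inl x)) (ι (Sum.inr (n, ψ n x))) = 0 := by
        rw [hι, glueD_inl_inr]
        exact dist_self _
      exact dist_eq_zero.1 h0
    have hθme : ∀ n, MeasurableEmbedding (Prod.map (θ n) (id : I → I)) := by
      intro n
      letI := mZ n; letI := msZ n; haveI := hbZ n; haveI := hcompZ n
      have h1 : MeasurableEmbedding (θ n) :=
        (hθiso n).isClosedEmbedding.measurableEmbedding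
      exact h1.prodMap MeasurableEmbedding.id
    have hαm : ∀ n, Measurable (Prod.map (α n) (id : I → I)) := by
      intro n; letI := mZ n; letI := msZ n; haveI := hbZ n
      exact ((hα n).continuous.measurable).prodMap measurable_id
    have hβm : ∀ n, Measurable (Prod.map (β n) (id : I → I)) := by
      intro n; letI := mZ n; letI := msZ n; haveI := hbZ n
      exact ((hβ n).continuous.measurable).prodMap measurable_id
    have hPn : ∀ n, prohorovDistSum
        ((μn n).map (Prod.map (fun a => θ n (α n a)) (id : I → I)))
        (μX.map (Prod.map (fun x => ι (Sum.inl x)) (id : I → I)))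
        = prohorovDistSum ((μn n).map (Prod.map (α n) id)) (μX.map (Prod.map (β n) id)) := by
      intro n
      letI := mZ n; letI := msZ n; haveI := hbZ n
      have e1 : (μn n).map (Prod.map (fun a => θ n (α n a)) (id : I → I))
          = ((μn n).map (Prod.map (α n) id)).map (Prod.map (θ n) id) := by
        rw [Measure.map_map (hθme n).measurable (hαm n)]
        rfl
      have e2 : μX.map (Prod.map (fun x => ι (Sum.inl x)) (id : I → I))
          = (μX.map (Prod.map (β n) id)).map (Prod.map (θ n) id) := by
        rw [Measure.map_map (hθme n).measurable (hβm n)]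
        congr 1
        funext p
        exact congrArg (fun c => (c, p.2)) (hglue0 n p.1)
      rw [e1, e2]
      exact prohorovDistSum_map_eq (θ n) (hθd n) (hθme n) _ _
    -- the common separable complete space
    have hXiso : Isometry (fun x : X => ι (Sum.inl x)) :=
      Isometry.of_dist_eq fun a b => by rw [hι, glueD_inl_inl]
    have hniso : ∀ n, Isometry (fun a : Xn n => θ n (α n a)) := by
      intro n
      letI := mZ n
      exact Isometry.of_dist_eq fun a b => by rw [hθd, (hα n).dist_eq]
    let T : Set C := Set.range (fun x : X => ι (Sum.inl x))
      ∪ ⋃ n, Set.range (fun a : Xn n => θ n (α n a))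
    have hTsep : TopologicalSpace.IsSeparable T := by
      apply TopologicalSpace.IsSeparable.union
      · exact TopologicalSpace.isSeparable_range hXiso.continuous
      · exact (TopologicalSpace.isSeparable_iUnion).2 fun n =>
          TopologicalSpace.isSeparable_range (hniso n).continuous
    let Zf : Type := ↥(closure T)
    haveI : TopologicalSpace.SeparableSpace Zf := hTsep.closure.separableSpace
    haveI : CompleteSpace Zf := isClosed_closure.completeSpace_coe
    let φX : X → Zf := fun x => ⟨ι (Sum.inl x), subset_closure (Or.inl ⟨x, rfl⟩)⟩
    let φs : ∀ n, Xn n → Zf := fun n a =>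
      ⟨θ n (α n a), subset_closure (Or.inr (Set.mem_iUnion.2 ⟨n, ⟨a, rfl⟩⟩))⟩
    have hφX : Isometry φX := Isometry.of_dist_eq fun a b => by
      rw [Subtype.dist_eq]; exact hXiso.dist_eq a b
    have hφs : ∀ n, Isometry (φs n) := fun n => Isometry.of_dist_eq fun a b => by
      rw [Subtype.dist_eq]; exact (hniso n).dist_eq a b
    have hvme : MeasurableEmbedding (Prod.map (Subtype.val : Zf → C) (id : I → I)) :=
      (MeasurableEmbedding.subtype_coe isClosed_closure.measurableSet).prodMap
        MeasurableEmbedding.id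
    have hφsm : ∀ n, Measurable (Prod.map (φs n) (id : I → I)) := fun n =>
      (((hφs n).continuous).measurable).prodMap measurable_id
    have hφXm : Measurable (Prod.map φX (id : I → I)) :=
      ((hφX.continuous).measurable).prodMap measurable_id
    have hfinal : ∀ n, prohorovDistSum ((μn n).map (Prod.map (φs n) (id : I → I)))
        (μX.map (Prod.map φX (id : I → I)))
        = prohorovDistSum ((μn n).map (Prod.map (α n) id)) (μX.map (Prod.map (β n) id)) := by
      intro n
      letI := mZ n; letI := msZ n
      rw [← prohorovDistSum_map_eq (Subtype.val : Zf → C)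
        (fun a b => (Subtype.dist_eq a b).symm) hvme]
      rw [Measure.map_map hvme.measurable (hφsm n), Measure.map_map hvme.measurable hφXm]
      have e1 : (Prod.map (Subtype.val : Zf → C) (id : I → I)) ∘ (Prod.map (φs n) id)
          = Prod.map (fun a : Xn n => θ n (α n a)) (id : I → I) := rfl
      have e2 : (Prod.map (Subtype.val : Zf → C) (id : I → I)) ∘ (Prod.map φX id)
          = Prod.map (fun x : X => ι (Sum.inl x)) (id : I → I) := rfl
      rw [e1, e2, hPn n]
    refine ⟨Zf, inferInstance, inferInstance, inferInstance, inferInstance, inferInstance,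
      φX, φs, hφX, hφs, ?_⟩
    have hg : Tendsto (fun n : ℕ => mGPDist (μn n) μX + 1 / (n + 1)) atTop (𝓝 0) := by
      have := hconv.add tendsto_one_div_add_atTop_nhds_zero_nat
      simpa using this
    refine squeeze_zero (fun n => prohorovDistSum_nonneg _ _) (fun n => ?_) hg
    rw [hfinal n]
    exact (hlt n).le
  · rintro ⟨Z, mZ, msZ, hbZ, hsepZ, hcompZ, φX, φs, hφX, hφs, htend⟩
    refine squeeze_zero (fun n => ?_) (fun n => ?_) htend
    · exact Real.sInf_nonneg fun d hd => by
        obtain ⟨Z', mz', ms', _, _, _, φ₁, φ₂, _, _, rfl⟩ := hd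
        exact prohorovDistSum_nonneg _ _
    · refine csInf_le ⟨0, fun d hd => ?_⟩ ?_
      · obtain ⟨Z', mz', ms', _, _, _, φ₁, φ₂, _, _, rfl⟩ := hd
        exact prohorovDistSum_nonneg _ _
      · exact ⟨Z, mZ, msZ, hbZ, hsepZ, hcompZ, φs n, φX, hφs n, hφX, rfl⟩

end
end

section
/- There exists a countable family V of bounded continuous real-valued functions on ℝ₊^{(ℕ choose 2)} × I^ℕ, each of the form φ((r_{ij})_{i<j}, (u_k)_k) = ∏_{k=1}^n g_k(u_k) ∏_{1≤k<l≤n} f_{kl}(r_{kl}) for some n ∈ ℕ and bounded continuous g_k on I and f_{kl} on ℝ₊ (in particular each φ depends on only finitely many coordinates), such that for all I-marked metric measure spaces (X, r, μ) and (X_n, r_n, μ_n), n ≥ 1, the marked distance matrix distributions ν^{(X_n,r_n,μ_n)} converge weakly to ν^{(X,r,μ)} if and only if ∫ φ dν^{(X_n,r_n,μ_n)} → ∫ φ dν^{(X,r,μ)} for every φ ∈ V. -/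
open MeasureTheory Topology Filter NNReal BoundedContinuousFunction

noncomputable section

/-! ### Auxiliary constructions for the proof -/

/-- Truncated distance to a base point, as a bounded continuous function. -/
def kurBCF {α : Type*} [PseudoMetricSpace α] (b : α) : α →ᵇ ℝ :=
  BoundedContinuousFunction.mkOfBound
    ⟨fun a => min 1 (dist a b), continuous_const.min (continuous_id.dist continuous_const)⟩ 1
    (by
      intro x y
      have h1 : (0:ℝ) ≤ min 1 (dist x b) := le_min one_pos.le dist_nonneg
      have h2 : min 1 (dist x b) ≤ 1 := min_le_left _ _
      have h3 : (0:ℝ) ≤ min 1 (dist y b) := le_min one_pos.le dist_nonneg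
      have h4 : min 1 (dist y b) ≤ 1 := min_le_left _ _
      simp only [ContinuousMap.coe_mk, Real.dist_eq]
      rw [abs_le]
      constructor <;> linarith)

lemma kurBCF_apply {α : Type*} [PseudoMetricSpace α] (b a : α) :
    kurBCF b a = min 1 (dist a b) := rfl

lemma kurBCF_mem {α : Type*} [PseudoMetricSpace α] (b a : α) :
    kurBCF b a ∈ Set.Icc (0:ℝ) 1 :=
  ⟨le_min one_pos.le dist_nonneg, min_le_left _ _⟩

/-- Kuratowski-type key lemma: closeness of one well-chosen truncated-distance coordinate
controls the distance. -/
lemma kur_key {α : Type*} [PseudoMetricSpace α] {q : ℕ → α} (hq : DenseRange q)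
    (a₀ : α) {δ : ℝ} (hδ : 0 < δ) :
    ∃ m : ℕ, ∃ ε : ℝ, 0 < ε ∧ ∀ a : α,
      dist (kurBCF (q m) a) (kurBCF (q m) a₀) < ε → dist a a₀ < δ := by
  set δ' := min δ 1 with hδ'def
  have hδ' : 0 < δ' := lt_min hδ one_pos
  have hδ'le : δ' ≤ 1 := min_le_right _ _
  have hδ'le' : δ' ≤ δ := min_le_left _ _
  obtain ⟨m, hm⟩ := hq.exists_dist_lt a₀ (by positivity : (0:ℝ) < δ'/3)
  refine ⟨m, δ'/3, by positivity, fun a ha => ?_⟩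
  rw [Real.dist_eq, kurBCF_apply, kurBCF_apply] at ha
  have hq0 : dist a₀ (q m) < δ'/3 := hm
  have h1 : min 1 (dist a₀ (q m)) = dist a₀ (q m) :=
    min_eq_right (le_of_lt (lt_of_lt_of_le hq0 (by linarith)))
  rw [h1] at ha
  obtain ⟨ha1, ha2⟩ := abs_lt.mp ha
  have h2 : min 1 (dist a (q m)) < 2*δ'/3 := by linarith
  have h3 : dist a (q m) < 2*δ'/3 := by
    rcases min_lt_iff.mp h2 with h | h
    · linarith
    · exact h
  calc dist a a₀ ≤ dist a (q m) + dist a₀ (q m) := dist_triangle_right a a₀ (q m)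
    _ < 2*δ'/3 + δ'/3 := by linarith
    _ ≤ δ := by linarith

/-- Evaluation of a finite product of bounded continuous functions. -/
lemma bcf_prod_apply {α γ : Type*} [TopologicalSpace α] (s : Finset γ)
    (f : γ → (α →ᵇ ℝ)) (x : α) :
    (∏ i ∈ s, f i) x = ∏ i ∈ s, f i x := by
  classical
  induction s using Finset.cons_induction with
  | empty => simp
  | cons a s ha ih =>
      rw [Finset.prod_cons, Finset.prod_cons, ← ih]
      rfl

/-- Index type for the compact cube. -/
abbrev QIdx : Type := (PairIdx × ℕ) ⊕ (ℕ × ℕ)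

/-- The compact cube into which the marked distance matrix space embeds. -/
abbrev QSp : Type := QIdx → Set.Icc (0:ℝ) 1

/-- Coordinate functions on the cube. -/
def coordQ (i : QIdx) : C(QSp, ℝ) :=
  ⟨fun y => (y i : ℝ), continuous_subtype_val.comp (continuous_apply i)⟩

/-- Monomials on the cube. -/
def monoQ (c : QIdx →₀ ℕ) : C(QSp, ℝ) := c.prod fun i e => (coordQ i)^e

lemma monoQ_single (i : QIdx) : monoQ (Finsupp.single i 1) = coordQ i := by
  rw [monoQ, Finsupp.prod_single_index (h := fun j e => coordQ j ^ e) (pow_zero _)]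
  exact pow_one _

lemma monoQ_add (c d : QIdx →₀ ℕ) : monoQ (c + d) = monoQ c * monoQ d :=
  Finsupp.prod_add_index' (fun _ => pow_zero _) (fun _ _ _ => pow_add _ _ _)

lemma monoQ_apply (c : QIdx →₀ ℕ) (y : QSp) :
    monoQ c y = ∏ i ∈ c.support, (y i : ℝ)^(c i) := by
  rw [monoQ, Finsupp.prod, ContinuousMap.prod_apply]
  exact Finset.prod_congr rfl fun i _ => rfl

/-- Every element of the multiplicative closure of the coordinate functions is a monomial. -/
lemma mem_closure_monoQ {F : C(QSp, ℝ)}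
    (hF : F ∈ Submonoid.closure (Set.range coordQ)) :
    ∃ c : QIdx →₀ ℕ, F = monoQ c := by
  refine Submonoid.closure_induction ?_ ?_ ?_ hF
  · rintro x ⟨i, rfl⟩
    exact ⟨Finsupp.single i 1, (monoQ_single i).symm⟩
  · exact ⟨0, by rw [monoQ, Finsupp.prod_zero_index]⟩
  · rintro x y hx hy ⟨c, rfl⟩ ⟨d, rfl⟩
    exact ⟨c + d, (monoQ_add c d).symm⟩

section Marked

variable {I : Type} [MetricSpace I] (qR : ℕ → ℝ≥0) (qI : ℕ → I)

/-- Evaluation of a distance-matrix entry, as a continuous map. -/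
def evalDist (p : PairIdx) : C(MDM I, ℝ≥0) :=
  ⟨fun x => x.1 p, (continuous_apply p).comp continuous_fst⟩

/-- Evaluation of a mark, as a continuous map. -/
def evalMark (k : ℕ) : C(MDM I, I) :=
  ⟨fun x => x.2 k, (continuous_apply k).comp continuous_snd⟩

/-- The basic bounded continuous factors on `MDM I`. -/
def facMDM : QIdx → (MDM I →ᵇ ℝ)
  | .inl q => (kurBCF (qR q.2)).compContinuous (evalDist q.1)
  | .inr q => (kurBCF (qI q.2)).compContinuous (evalMark q.1)

lemma facMDM_mem (i : QIdx) (x : MDM I) : facMDM qR qI i x ∈ Set.Icc (0:ℝ) 1 := by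
  cases i with
  | inl q => exact kurBCF_mem _ _
  | inr q => exact kurBCF_mem _ _

lemma facMDM_inl (p : PairIdx) (m : ℕ) (x : MDM I) :
    facMDM qR qI (.inl (p, m)) x = kurBCF (qR m) (x.1 p) := rfl

lemma facMDM_inr (k m : ℕ) (x : MDM I) :
    facMDM qR qI (.inr (k, m)) x = kurBCF (qI m) (x.2 k) := rfl

/-- The countable family of product-form test functions. -/
def phiV (c : QIdx →₀ ℕ) : MDM I →ᵇ ℝ := c.prod fun i e => (facMDM qR qI i)^e

lemma phiV_apply (c : QIdx →₀ ℕ) (x : MDM I) :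
    phiV qR qI c x = ∏ i ∈ c.support, (facMDM qR qI i x)^(c i) := by
  rw [phiV, Finsupp.prod, bcf_prod_apply]
  exact Finset.prod_congr rfl fun i _ => rfl

/-- The embedding of `MDM I` into the cube. -/
def embQ : MDM I → QSp := fun x i => ⟨facMDM qR qI i x, facMDM_mem qR qI i x⟩

lemma continuous_embQ : Continuous (embQ qR qI) :=
  continuous_pi fun i => Continuous.subtype_mk (facMDM qR qI i).continuous _

lemma monoQ_comp_embQ (c : QIdx →₀ ℕ) (x : MDM I) :
    monoQ c (embQ qR qI x) = phiV qR qI c x := by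
  rw [monoQ_apply, phiV_apply]
  rfl

/-- The product-form test functions have the required product form. -/
lemma phiV_form (c : QIdx →₀ ℕ) :
    ∃ (n : ℕ) (g : ℕ → (I →ᵇ ℝ)) (f : PairIdx → (ℝ≥0 →ᵇ ℝ)),
      ∀ x : MDM I,
        phiV qR qI c x = (∏ k ∈ Finset.range n, g k (x.2 k)) *
          ∏ p ∈ Finset.subtype (fun p : ℕ × ℕ => p.1 < p.2)
              (Finset.range n ×ˢ Finset.range n), f p (x.1 p) := by
  classical
  obtain ⟨N, hN⟩ : ∃ N : ℕ, ∀ i ∈ c.support,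
      Sum.elim (fun q : PairIdx × ℕ => max q.1.1.2 q.2) (fun q : ℕ × ℕ => max q.1 q.2) i < N :=
    ⟨_, fun i hi => Nat.lt_succ_of_le (Finset.le_sup hi)⟩
  refine ⟨N, fun k => ∏ m ∈ Finset.range N, (kurBCF (qI m))^(c (.inr (k, m))),
    fun p => ∏ m ∈ Finset.range N, (kurBCF (qR m))^(c (.inl (p, m))), fun x => ?_⟩
  set PS : Finset PairIdx :=
    Finset.subtype (fun p : ℕ × ℕ => p.1 < p.2) (Finset.range N ×ˢ Finset.range N) with hPS
  set B : Finset QIdx := (PS ×ˢ Finset.range N).disjSum (Finset.range N ×ˢ Finset.range N)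
    with hB
  have hsub : c.support ⊆ B := by
    intro i hi
    have hle := hN i hi
    cases i with
    | inl q =>
      simp only [Sum.elim_inl] at hle
      have h1 : q.1.1.2 < N := lt_of_le_of_lt (le_max_left _ _) hle
      have h2 : q.2 < N := lt_of_le_of_lt (le_max_right _ _) hle
      have h0 : q.1.1.1 < N := lt_trans q.1.2 h1
      rw [hB, Finset.inl_mem_disjSum, Finset.mem_product]
      refine ⟨?_, Finset.mem_range.mpr h2⟩
      rw [hPS, Finset.mem_subtype, Finset.mem_product]
      exact ⟨Finset.mem_range.mpr h0, Finset.mem_range.mpr h1⟩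
    | inr q =>
      simp only [Sum.elim_inr] at hle
      rw [hB, Finset.inr_mem_disjSum, Finset.mem_product]
      exact ⟨Finset.mem_range.mpr (lt_of_le_of_lt (le_max_left _ _) hle),
        Finset.mem_range.mpr (lt_of_le_of_lt (le_max_right _ _) hle)⟩
  have key : phiV qR qI c x = ∏ i ∈ B, (facMDM qR qI i x)^(c i) := by
    rw [phiV_apply]
    refine Finset.prod_subset hsub fun i _ hi => ?_
    rw [Finsupp.notMem_support_iff.mp hi, pow_zero]
  rw [key, hB, Finset.prod_disjSum, mul_comm]
  congr 1
  · rw [Finset.prod_product]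
    refine Finset.prod_congr rfl fun k _ => ?_
    rw [bcf_prod_apply]
    refine (Finset.prod_congr rfl fun m _ => ?_).symm
    rfl
  · rw [Finset.prod_product]
    refine Finset.prod_congr rfl fun p _ => ?_
    rw [bcf_prod_apply]
    refine (Finset.prod_congr rfl fun m _ => ?_).symm
    rfl

/-- Open sets of `MDM I` are pulled back from open sets of the cube. -/
lemma exists_open_reflect (hqR : DenseRange qR) (hqI : DenseRange qI)
    {G : Set (MDM I)} (hG : IsOpen G) :
    ∃ W : Set QSp, IsOpen W ∧ embQ qR qI ⁻¹' W = G := by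
  have key : ∀ x ∈ G, ∃ W : Set QSp,
      IsOpen W ∧ embQ qR qI x ∈ W ∧ embQ qR qI ⁻¹' W ⊆ G := by
    intro x hx
    obtain ⟨U₁, U₂, hU₁, hU₂, hx1, hx2, hsub⟩ := isOpen_prod_iff.mp hG x.1 x.2 hx
    obtain ⟨t₁, u₁, hu₁, hpi₁⟩ := isOpen_pi_iff.mp hU₁ x.1 hx1
    obtain ⟨t₂, u₂, hu₂, hpi₂⟩ := isOpen_pi_iff.mp hU₂ x.2 hx2
    have hb₁ : ∀ p : PairIdx, ∃ δ : ℝ, 0 < δ ∧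
        (p ∈ t₁ → Metric.ball (x.1 p) δ ⊆ u₁ p) := by
      intro p
      by_cases hp : p ∈ t₁
      · obtain ⟨δ, hδ, hball⟩ := Metric.isOpen_iff.mp (hu₁ p hp).1 _ (hu₁ p hp).2
        exact ⟨δ, hδ, fun _ => hball⟩
      · exact ⟨1, one_pos, fun h => absurd h hp⟩
    choose δ₁ hδ₁ hball₁ using hb₁
    have hb₂ : ∀ k : ℕ, ∃ δ : ℝ, 0 < δ ∧
        (k ∈ t₂ → Metric.ball (x.2 k) δ ⊆ u₂ k) := by
      intro k
      by_cases hk : k ∈ t₂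
      · obtain ⟨δ, hδ, hball⟩ := Metric.isOpen_iff.mp (hu₂ k hk).1 _ (hu₂ k hk).2
        exact ⟨δ, hδ, fun _ => hball⟩
      · exact ⟨1, one_pos, fun h => absurd h hk⟩
    choose δ₂ hδ₂ hball₂ using hb₂
    choose m₁ ε₁ hε₁ hk₁ using fun p : PairIdx => kur_key hqR (x.1 p) (hδ₁ p)
    choose m₂ ε₂ hε₂ hk₂ using fun k : ℕ => kur_key hqI (x.2 k) (hδ₂ k)
    refine ⟨(⋂ p ∈ t₁, {y : QSp |
        dist ((y (.inl (p, m₁ p)) : ℝ)) ((embQ qR qI x (.inl (p, m₁ p)) : ℝ)) < ε₁ p}) ∩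
      (⋂ k ∈ t₂, {y : QSp |
        dist ((y (.inr (k, m₂ k)) : ℝ)) ((embQ qR qI x (.inr (k, m₂ k)) : ℝ)) < ε₂ k}),
      ?_, ?_, ?_⟩
    · refine IsOpen.inter (isOpen_biInter_finset fun p _ => ?_)
        (isOpen_biInter_finset fun k _ => ?_)
      · exact isOpen_lt ((continuous_subtype_val.comp (continuous_apply _)).dist
          continuous_const) continuous_const
      · exact isOpen_lt ((continuous_subtype_val.comp (continuous_apply _)).dist
          continuous_const) continuous_const
    · constructor
      · refine Set.mem_iInter₂.mpr fun p _ => ?_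
        simp only [Set.mem_setOf_eq, dist_self]
        exact hε₁ p
      · refine Set.mem_iInter₂.mpr fun k _ => ?_
        simp only [Set.mem_setOf_eq, dist_self]
        exact hε₂ k
    · rintro x' ⟨h₁, h₂⟩
      have hx'1 : x'.1 ∈ U₁ := by
        refine hpi₁ fun p hp => ?_
        have hd := Set.mem_iInter₂.mp h₁ p hp
        simp only [Set.mem_setOf_eq] at hd
        have hd' : dist (kurBCF (qR (m₁ p)) (x'.1 p)) (kurBCF (qR (m₁ p)) (x.1 p)) < ε₁ p := by
          have e1 : ((embQ qR qI x' (.inl (p, m₁ p)) : ℝ)) = kurBCF (qR (m₁ p)) (x'.1 p) :=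
            facMDM_inl qR qI p (m₁ p) x'
          have e2 : ((embQ qR qI x (.inl (p, m₁ p)) : ℝ)) = kurBCF (qR (m₁ p)) (x.1 p) :=
            facMDM_inl qR qI p (m₁ p) x
          rwa [e1, e2] at hd
        exact hball₁ p hp (Metric.mem_ball.mpr (hk₁ p (x'.1 p) hd'))
      have hx'2 : x'.2 ∈ U₂ := by
        refine hpi₂ fun k hk => ?_
        have hd := Set.mem_iInter₂.mp h₂ k hk
        simp only [Set.mem_setOf_eq] at hd
        have hd' : dist (kurBCF (qI (m₂ k)) (x'.2 k)) (kurBCF (qI (m₂ k)) (x.2 k)) < ε₂ k := by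
          have e1 : ((embQ qR qI x' (.inr (k, m₂ k)) : ℝ)) = kurBCF (qI (m₂ k)) (x'.2 k) :=
            facMDM_inr qR qI k (m₂ k) x'
          have e2 : ((embQ qR qI x (.inr (k, m₂ k)) : ℝ)) = kurBCF (qI (m₂ k)) (x.2 k) :=
            facMDM_inr qR qI k (m₂ k) x
          rwa [e1, e2] at hd
        exact hball₂ k hk (Metric.mem_ball.mpr (hk₂ k (x'.2 k) hd'))
      exact hsub (Set.mem_prod.mpr ⟨hx'1, hx'2⟩)
  choose W hWo hWx hWs using key
  refine ⟨⋃ (x : MDM I) (hx : x ∈ G), W x hx,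
    isOpen_iUnion fun x => isOpen_iUnion fun hx => hWo x hx, ?_⟩
  apply Set.Subset.antisymm
  · intro x' hx'
    simp only [Set.preimage_iUnion, Set.mem_iUnion] at hx'
    obtain ⟨x, hx, hmem⟩ := hx'
    exact hWs x hx hmem
  · intro x hx
    simp only [Set.mem_preimage, Set.mem_iUnion]
    exact ⟨x, hx, hWx x hx⟩

end Marked

/-- ε/3-argument: convergence of integrals passes to the sup-norm closure. -/
lemma tendsto_integral_of_mem_closure {Ω : Type*} [MeasurableSpace Ω] [TopologicalSpace Ω]
    [CompactSpace Ω] [OpensMeasurableSpace Ω]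
    (P : Measure Ω) [IsProbabilityMeasure P] (Pn : ℕ → Measure Ω)
    [∀ n, IsProbabilityMeasure (Pn n)] (s : Set C(Ω, ℝ))
    (hs : ∀ G ∈ s, Tendsto (fun n => ∫ y, G y ∂(Pn n)) atTop (𝓝 (∫ y, G y ∂P)))
    {F : C(Ω, ℝ)} (hF : F ∈ closure s) :
    Tendsto (fun n => ∫ y, F y ∂(Pn n)) atTop (𝓝 (∫ y, F y ∂P)) := by
  rw [Metric.tendsto_atTop]
  intro ε hε
  obtain ⟨G, hGs, hGF⟩ := Metric.mem_closure_iff.mp hF (ε/3) (by linarith)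
  have hint : ∀ (μ : Measure Ω), IsProbabilityMeasure μ →
      |∫ y, F y ∂μ - ∫ y, G y ∂μ| ≤ ε/3 := by
    intro μ hμ
    have hiF : Integrable (⇑F) μ := (BoundedContinuousFunction.mkOfCompact F).integrable μ
    have hiG : Integrable (⇑G) μ := (BoundedContinuousFunction.mkOfCompact G).integrable μ
    rw [← integral_sub hiF hiG]
    have hb : ∀ y, ‖F y - G y‖ ≤ ε/3 := fun y => by
      rw [Real.norm_eq_abs, ← Real.dist_eq]
      exact le_trans (ContinuousMap.dist_apply_le_dist y) (le_of_lt hGF)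
    calc |∫ y, (F y - G y) ∂μ| ≤ ε/3 * (μ Set.univ).toReal := by
          rw [← Real.norm_eq_abs]
          exact norm_integral_le_of_norm_le_const (Filter.Eventually.of_forall hb)
      _ = ε/3 := by rw [measure_univ]; simp
  obtain ⟨N, hN⟩ := (Metric.tendsto_atTop.mp (hs G hGs)) (ε/3) (by linarith)
  refine ⟨N, fun n hn => ?_⟩
  have h1 := hint (Pn n) inferInstance
  have h2 := hint P inferInstance
  have h3 := hN n hn
  rw [Real.dist_eq] at h3 ⊢
  have t1 : |(∫ y, F y ∂(Pn n)) - ∫ y, F y ∂P| ≤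
      |(∫ y, F y ∂(Pn n)) - ∫ y, G y ∂(Pn n)| + |(∫ y, G y ∂(Pn n)) - ∫ y, F y ∂P| :=
    abs_sub_le _ _ _
  have t2 : |(∫ y, G y ∂(Pn n)) - ∫ y, F y ∂P| ≤
      |(∫ y, G y ∂(Pn n)) - ∫ y, G y ∂P| + |(∫ y, G y ∂P) - ∫ y, F y ∂P| :=
    abs_sub_le _ _ _
  have t3 : |(∫ y, G y ∂P) - ∫ y, F y ∂P| = |(∫ y, F y ∂P) - ∫ y, G y ∂P| :=
    abs_sub_comm _ _
  linarith

/-- The distance matrix map is continuous. -/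
lemma continuous_distMatMap (X I : Type) [PseudoMetricSpace X] [TopologicalSpace I] :
    Continuous (distMatMap X I) := by
  unfold distMatMap
  refine Continuous.prodMk (continuous_pi fun p => ?_) (continuous_pi fun k => ?_)
  · exact Continuous.nndist (Continuous.fst (continuous_apply p.1.1))
      (Continuous.fst (continuous_apply p.1.2))
  · exact Continuous.snd (continuous_apply k)

/-- cf. Proposition 4.2: there is a countable family `V` of bounded
continuous functions of product form
`φ(r̲̲, u̲) = ∏_{k<n} g_k(u_k) · ∏_{k<l<n} f_{kl}(r_{kl})`
which is convergence determining for marked distance matrix distributions: weak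
convergence `ν^{xₙ} ⇒ ν^x` holds iff `∫ φ dν^{xₙ} → ∫ φ dν^x` for all `φ ∈ V`. -/
theorem exists_countable_convergence_determining_family
    {I : Type} [MetricSpace I] [CompleteSpace I] [TopologicalSpace.SeparableSpace I]
    [MeasurableSpace I] [BorelSpace I] :
    ∃ V : Set (MDM I →ᵇ ℝ), V.Countable ∧
      (∀ φ ∈ V, ∃ (n : ℕ) (g : ℕ → (I →ᵇ ℝ)) (f : PairIdx → (ℝ≥0 →ᵇ ℝ)),
        ∀ x : MDM I,
          φ x = (∏ k ∈ Finset.range n, g k (x.2 k)) *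
            ∏ p ∈ Finset.subtype (fun p : ℕ × ℕ => p.1 < p.2)
                (Finset.range n ×ˢ Finset.range n), f p (x.1 p)) ∧
      (∀ (X : Type) (_ : MetricSpace X) (_ : MeasurableSpace X),
        BorelSpace X → CompleteSpace X → TopologicalSpace.SeparableSpace X →
        ∀ μ : Measure (X × I), IsProbabilityMeasure μ →
        ∀ μinf : Measure (ℕ → X × I), IsProductMeasure μ μinf →
        ∀ (Xn : ℕ → Type) (_ : ∀ n, MetricSpace (Xn n)) (_ : ∀ n, MeasurableSpace (Xn n)),
          (∀ n, BorelSpace (Xn n)) → (∀ n, CompleteSpace (Xn n)) →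
          (∀ n, TopologicalSpace.SeparableSpace (Xn n)) →
        ∀ μn : (n : ℕ) → Measure (Xn n × I), (∀ n, IsProbabilityMeasure (μn n)) →
        ∀ μninf : (n : ℕ) → Measure (ℕ → Xn n × I),
          (∀ n, IsProductMeasure (μn n) (μninf n)) →
        (WeakConvSeq (fun n => mDMD (I := I) (μninf n)) (mDMD (I := I) μinf) ↔
          ∀ φ ∈ V, Tendsto (fun n => ∫ x, φ x ∂(mDMD (I := I) (μninf n))) atTop
            (𝓝 (∫ x, φ x ∂(mDMD (I := I) μinf))))) := by
  classical
  by_cases hI : Nonempty I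
  case neg =>
    refine ⟨∅, Set.countable_empty, fun φ hφ => absurd hφ (Set.notMem_empty φ), ?_⟩
    intro X _ _ _ _ _ μ hμ μinf hμinf Xn _ _ _ _ _ μn hμn μninf hμninf
    haveI : IsEmpty (X × I) := ⟨fun p => hI ⟨p.2⟩⟩
    have h0 : (μ : Measure (X × I)) Set.univ = 0 := by
      rw [Set.univ_eq_empty_iff.mpr ‹IsEmpty (X × I)›]
      exact measure_empty
    exact absurd (hμ.measure_univ ▸ h0) one_ne_zero
  case pos =>
    obtain ⟨qI, hqI⟩ := TopologicalSpace.exists_dense_seq I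
    obtain ⟨qR, hqR⟩ := TopologicalSpace.exists_dense_seq ℝ≥0
    refine ⟨Set.range (phiV qR qI), Set.countable_range _, ?_, ?_⟩
    · rintro φ ⟨c, rfl⟩
      exact phiV_form qR qI c
    intro X _ _ _ _ _ μ hμ μinf hμinf Xn _ _ _ _ _ μn hμn μninf hμninf
    haveI : SecondCountableTopology I := UniformSpace.secondCountable_of_separable I
    haveI : SecondCountableTopology X := UniformSpace.secondCountable_of_separable X
    haveI : ∀ n, SecondCountableTopology (Xn n) :=
      fun n => UniformSpace.secondCountable_of_separable (Xn n)
    haveI := hμinf.1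
    haveI : ∀ n, IsProbabilityMeasure (μninf n) := fun n => (hμninf n).1
    haveI hPM : IsProbabilityMeasure (mDMD (I := I) μinf) :=
      Measure.isProbabilityMeasure_map (continuous_distMatMap X I).measurable.aemeasurable
    haveI hPMn : ∀ n, IsProbabilityMeasure (mDMD (I := I) (μninf n)) :=
      fun n => Measure.isProbabilityMeasure_map (continuous_distMatMap (Xn n) I).measurable.aemeasurable
    constructor
    · intro hw φ hφ
      exact hw φ
    intro h
    -- measurable structure on the cube
    letI : MeasurableSpace QSp := borel QSp
    haveI : BorelSpace QSp := ⟨rfl⟩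
    have hembm : Measurable (embQ qR qI) := (continuous_embQ qR qI).measurable
    set QP : Measure QSp := (mDMD (I := I) μinf).map (embQ qR qI) with hQP
    set QPn : ℕ → Measure QSp := fun n => (mDMD (I := I) (μninf n)).map (embQ qR qI) with hQPn
    haveI hQPprob : IsProbabilityMeasure QP := Measure.isProbabilityMeasure_map hembm.aemeasurable
    haveI hQPnprob : ∀ n, IsProbabilityMeasure (QPn n) :=
      fun n => Measure.isProbabilityMeasure_map hembm.aemeasurable
    -- integrals of monomials converge
    have hmonoInt : ∀ (c : QIdx →₀ ℕ) (ρ : Measure (MDM I)),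
        ∫ y, monoQ c y ∂(ρ.map (embQ qR qI)) = ∫ x, phiV qR qI c x ∂ρ := by
      intro c ρ
      rw [integral_map hembm.aemeasurable (monoQ c).continuous.aestronglyMeasurable]
      exact integral_congr_ae (Filter.Eventually.of_forall fun x => monoQ_comp_embQ qR qI c x)
    -- integrals of all elements of the adjoin algebra converge
    have hA : ∀ F ∈ (Algebra.adjoin ℝ (Set.range coordQ) : Subalgebra ℝ C(QSp, ℝ)),
        Tendsto (fun n => ∫ y, F y ∂(QPn n)) atTop (𝓝 (∫ y, F y ∂QP)) := by
      intro F hF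
      have hF' : F ∈ Submodule.span ℝ
          ((Submonoid.closure (Set.range coordQ) : Submonoid C(QSp, ℝ)) : Set C(QSp, ℝ)) := by
        rw [← Algebra.adjoin_eq_span]
        exact (Subalgebra.mem_toSubmodule _).mpr hF
      clear hF
      induction hF' using Submodule.span_induction with
      | mem u hu =>
        obtain ⟨c, rfl⟩ := mem_closure_monoQ hu
        simp only [hQPn, hQP, hmonoInt c]
        exact h (phiV qR qI c) ⟨c, rfl⟩
      | zero =>
        simpa using tendsto_const_nhds
      | add u v hu hv ihu ihv =>
        have ex : ∀ (ρ : Measure QSp), IsProbabilityMeasure ρ →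
            ∫ z, (u + v) z ∂ρ = (∫ z, u z ∂ρ) + ∫ z, v z ∂ρ := by
          intro ρ hρ
          simp only [ContinuousMap.add_apply]
          exact integral_add ((BoundedContinuousFunction.mkOfCompact u).integrable ρ)
            ((BoundedContinuousFunction.mkOfCompact v).integrable ρ)
        rw [show (fun n => ∫ z, (u + v) z ∂(QPn n)) =
            fun n => (∫ z, u z ∂(QPn n)) + ∫ z, v z ∂(QPn n) from
          funext fun n => ex (QPn n) (hQPnprob n), ex QP hQPprob]
        exact ihu.add ihv
      | smul a u hu ihu =>
        have ex : ∀ (ρ : Measure QSp), ∫ z, (a • u) z ∂ρ = a • ∫ z, u z ∂ρ := by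
          intro ρ
          simp only [ContinuousMap.smul_apply]
          exact integral_smul a _
        rw [show (fun n => ∫ z, (a • u) z ∂(QPn n)) =
            fun n => a • ∫ z, u z ∂(QPn n) from funext fun n => ex (QPn n), ex QP]
        exact ihu.const_smul a
    -- Stone-Weierstrass: the adjoin algebra is dense
    have hsep : (Algebra.adjoin ℝ (Set.range coordQ) : Subalgebra ℝ C(QSp, ℝ)).SeparatesPoints := by
      intro y y' hyy'
      have hne : ∃ i, y i ≠ y' i := by
        by_contra hc
        push_neg at hc
        exact hyy' (funext hc)
      obtain ⟨i, hi⟩ := hne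
      refine ⟨⇑(coordQ i), ⟨coordQ i, Algebra.subset_adjoin ⟨i, rfl⟩, rfl⟩, ?_⟩
      exact fun hcontra => hi (Subtype.coe_injective hcontra)
    have htop := ContinuousMap.subalgebra_topologicalClosure_eq_top_of_separatesPoints
      (Algebra.adjoin ℝ (Set.range coordQ)) hsep
    -- all bounded continuous integrals on the cube converge
    have hQall : ∀ f : QSp →ᵇ ℝ,
        Tendsto (fun n => ∫ y, f y ∂(QPn n)) atTop (𝓝 (∫ y, f y ∂QP)) := by
      intro f
      have hfc : f.toContinuousMap ∈
          closure ((Algebra.adjoin ℝ (Set.range coordQ) : Subalgebra ℝ C(QSp, ℝ)) :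
            Set C(QSp, ℝ)) := by
        have : f.toContinuousMap ∈
            (Algebra.adjoin ℝ (Set.range coordQ) : Subalgebra ℝ C(QSp, ℝ)).topologicalClosure :=
          htop.symm ▸ Algebra.mem_top
        exact this
      exact tendsto_integral_of_mem_closure QP QPn _ hA hfc
    -- package as probability measures on the cube and use portmanteau
    set Ph : ProbabilityMeasure QSp := ⟨QP, hQPprob⟩ with hPh
    set Phn : ℕ → ProbabilityMeasure QSp := fun n => ⟨QPn n, hQPnprob n⟩ with hPhn
    have hQtend : Tendsto Phn atTop (𝓝 Ph) :=
      ProbabilityMeasure.tendsto_iff_forall_integral_tendsto.mpr hQall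
    have hclosed : ∀ F : Set QSp, IsClosed F →
        (atTop.limsup fun n => QPn n F) ≤ QP F :=
      fun F hF => ProbabilityMeasure.limsup_measure_closed_le_of_tendsto hQtend hF
    -- transfer the open-set liminf condition to MDM I
    set νh : ProbabilityMeasure (MDM I) := ⟨mDMD (I := I) μinf, hPM⟩ with hνh
    set νhn : ℕ → ProbabilityMeasure (MDM I) := fun n => ⟨mDMD (I := I) (μninf n), hPMn n⟩
      with hνhn
    have h_opens : ∀ G, IsOpen G → νh G ≤ atTop.liminf (fun n => νhn n G) := by
      intro G hGo
      obtain ⟨Wq, hWo, hWpre⟩ := exists_open_reflect qR qI hqR hqI hGo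
      have hWm : MeasurableSet Wq := hWo.measurableSet
      have hlim : QP Wq ≤ atTop.liminf fun n => QPn n Wq :=
        le_measure_liminf_of_limsup_measure_compl_le hWm
          (hclosed _ (isClosed_compl_iff.mpr hWo))
      have hPW : QP Wq = (mDMD (I := I) μinf) G := by
        rw [hQP, Measure.map_apply hembm hWm, hWpre]
      have hPWn : ∀ n, QPn n Wq = (mDMD (I := I) (μninf n)) G := by
        intro n
        rw [hQPn]
        rw [Measure.map_apply hembm hWm, hWpre]
      have hENN : (mDMD (I := I) μinf) G ≤
          atTop.liminf fun n => (mDMD (I := I) (μninf n)) G := by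
        rw [← hPW]
        refine le_trans hlim (le_of_eq ?_)
        exact liminf_congr (Filter.Eventually.of_forall fun n => hPWn n)
      have aux : (ENNReal.ofNNReal (atTop.liminf fun n => νhn n G)) =
          atTop.liminf (fun n => (ENNReal.ofNNReal (νhn n G))) := by
        refine Monotone.map_liminf_of_continuousAt (F := atTop) ENNReal.coe_mono
          (fun n => νhn n G) ENNReal.continuous_coe.continuousAt ?_ ?_
        · exact IsBoundedUnder.isCoboundedUnder_ge ⟨1, by simp⟩
        · exact ⟨0, by simp⟩
      rw [← ENNReal.coe_le_coe, aux]
      simp only [ProbabilityMeasure.ennreal_coeFn_eq_coeFn_toMeasure]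
      exact hENN
    have hT := MeasureTheory.tendsto_of_forall_isOpen_le_liminf h_opens
    intro f
    exact ProbabilityMeasure.tendsto_iff_forall_integral_tendsto.mp hT f

end
end
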